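/- arXiv:0909.0438 — 3 statements merged into one kernel-verified Lean document; each statement's English description precedes it below -/
import Mathlib

section
/- For every integer n ≥ 1, exactly half of all persymmetric n×n matrices over F₂ are invertible; that is, the number Γ_n^{n×n} of persymmetric n×n matrices over F₂ of rank n equals 2^{2n−2}, while the total number of persymmetric n×n matrices over F₂ is 2^{2n−1}. -/
/-- A matrix over `ZMod 2` is persymmetric if its entries are constant along
anti-diagonals. -/
def IsPersymmetric {s k : ℕ} (M : Matrix (Fin s) (Fin k) (ZMod 2)) : Prop :=
  ∀ (a a' : Fin s) (b b' : Fin k), (a : ℕ) + (b : ℕ) = (a' : ℕ) + (b' : ℕ) → M a b = M a' b'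

/-- `persymRankCount s k i` is the number of persymmetric `s × k` matrices over `F₂`
of rank `i`. -/
noncomputable def persymRankCount (s k i : ℕ) : ℕ :=
  Nat.card {M : Matrix (Fin s) (Fin k) (ZMod 2) // IsPersymmetric M ∧ M.rank = i}

/-- `persymTotal s k` is the total number of persymmetric `s × k` matrices over `F₂`. -/
noncomputable def persymTotal (s k : ℕ) : ℕ :=
  Nat.card {M : Matrix (Fin s) (Fin k) (ZMod 2) // IsPersymmetric M}

open Polynomial Finset

noncomputable section
abbrev F2 := ZMod 2

lemma F2.eq_one {x : F2} (h : x ≠ 0) : x = 1 := by revert h; revert x; decide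

lemma F2.monic_of_ne_zero {g : F2[X]} (h : g ≠ 0) : g.Monic :=
  F2.eq_one (leadingCoeff_ne_zero.2 h)

def shiftL : (ℕ → F2) →ₗ[F2] (ℕ → F2) where
  toFun b := fun k => b (k+1)
  map_add' _ _ := rfl
  map_smul' _ _ := rfl

def act (g : F2[X]) (b : ℕ → F2) : ℕ → F2 := Polynomial.aeval shiftL g b

lemma shiftL_pow (i : ℕ) (b : ℕ → F2) (k : ℕ) : (shiftL ^ i) b k = b (k + i) := by
  induction i generalizing b k with
  | zero => rfl
  | succ m ih =>
    rw [pow_succ, Module.End.mul_apply, ih]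
    show b (k + m + 1) = _
    ring_nf

lemma act_apply_of_lt {g : F2[X]} {m : ℕ} (hm : g.natDegree < m) (b : ℕ → F2) (k : ℕ) :
    act g b k = ∑ j ∈ range m, g.coeff j * b (k + j) := by
  rw [act, aeval_eq_sum_range' hm]
  have : (∑ i ∈ range m, g.coeff i • shiftL ^ i) b k
      = ∑ i ∈ range m, g.coeff i • ((shiftL ^ i) b k) := by
    rw [LinearMap.sum_apply]
    simp [Finset.sum_apply]
  rw [this]
  exact Finset.sum_congr rfl fun i _ => by rw [shiftL_pow]; simp [smul_eq_mul]

lemma act_apply (g : F2[X]) (b : ℕ → F2) (k : ℕ) :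
    act g b k = ∑ j ∈ range (g.natDegree + 1), g.coeff j * b (k + j) :=
  act_apply_of_lt (Nat.lt_succ_self _) b k

lemma act_add (g h : F2[X]) (b : ℕ → F2) : act (g + h) b = act g b + act h b := by
  simp [act, map_add, LinearMap.add_apply]

lemma act_mul (g h : F2[X]) (b : ℕ → F2) : act (g * h) b = act g (act h b) := by
  simp [act, map_mul, Module.End.mul_apply]

lemma act_zero_left (b : ℕ → F2) : act 0 b = 0 := by simp [act]

lemma act_zero (g : F2[X]) : act g 0 = 0 := by simp [act]

lemma act_one (b : ℕ → F2) : act 1 b = b := by simp [act]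

lemma act_sub (g h : F2[X]) (b : ℕ → F2) : act (g - h) b = act g b - act h b := by
  simp [act, map_sub, LinearMap.sub_apply]

/-- congruence: act only looks at positions k..k+natDegree -/
lemma act_congr {g : F2[X]} {b c : ℕ → F2} {k : ℕ}
    (h : ∀ j, j ≤ g.natDegree → b (k + j) = c (k + j)) : act g b k = act g c k := by
  rw [act_apply, act_apply]
  exact Finset.sum_congr rfl fun j hj => by
    rw [h j (Nat.lt_succ_iff.mp (mem_range.mp hj))]

/-- Key zero lemma: a sequence annihilated by a monic polynomial which vanishes on the
first `natDegree` positions is zero. -/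
lemma act_eq_zero_seq_zero {f : F2[X]} (hf : f.Monic) {b : ℕ → F2}
    (hb : act f b = 0) (h0 : ∀ k, k < f.natDegree → b k = 0) : b = 0 := by
  set d := f.natDegree with hd
  have key : ∀ k, b k = 0 := by
    intro k
    induction k using Nat.strong_induction_on with
    | _ k ih =>
      by_cases hk : k < d
      · exact h0 k hk
      push_neg at hk
      have hw : act f b (k - d) = 0 := congrFun hb (k - d)
      rw [act_apply, Finset.sum_range_succ] at hw
      have htop : f.coeff d = 1 := hf
      have hkd : k - d + d = k := Nat.sub_add_cancel hk
      rw [← hd, htop, hkd, one_mul] at hw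
      have hrest : ∑ j ∈ range d, f.coeff j * b (k - d + j) = 0 := by
        apply Finset.sum_eq_zero
        intro j hj
        have hj' := mem_range.mp hj
        have hlt : k - d + j < k := by omega
        rw [ih _ hlt, mul_zero]
      rw [hrest, zero_add] at hw
      exact hw
  funext k; exact key k

lemma act_sub_seq (g : F2[X]) (b c : ℕ → F2) : act g (b - c) = act g b - act g c :=
  map_sub (Polynomial.aeval shiftL g) b c

lemma act_unique {f : F2[X]} (hf : f.Monic) {b c : ℕ → F2}
    (hb : act f b = 0) (hc : act f c = 0) (h0 : ∀ k, k < f.natDegree → b k = c k) :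
    b = c := by
  have h1 : act f (b - c) = 0 := by rw [act_sub_seq, hb, hc, sub_zero]
  have h2 : b - c = 0 := act_eq_zero_seq_zero hf h1
    (fun k hk => by simp [h0 k hk])
  exact sub_eq_zero.mp h2

/-- extend a seed sequence `s` beyond position `m` by the linear recurrence with
(monic) characteristic polynomial `f`. -/
def extSeq (f : F2[X]) (m : ℕ) (s : ℕ → F2) : ℕ → F2
  | k =>
    if k < m then s k
    else if hd : 0 < f.natDegree ∧ f.natDegree ≤ k then
      ∑ j ∈ (range f.natDegree).attach,
        f.coeff j * extSeq f m s (k - f.natDegree + j)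
    else 0
termination_by k => k
decreasing_by
  have := mem_range.mp j.2
  omega

lemma extSeq_lt {f : F2[X]} {m k : ℕ} {s : ℕ → F2} (h : k < m) :
    extSeq f m s k = s k := by
  rw [extSeq, if_pos h]

lemma extSeq_ge {f : F2[X]} {m k : ℕ} {s : ℕ → F2} (h : ¬ k < m)
    (hd : 0 < f.natDegree) (hdk : f.natDegree ≤ k) :
    extSeq f m s k = ∑ j ∈ range f.natDegree,
      f.coeff j * extSeq f m s (k - f.natDegree + j) := by
  rw [extSeq, if_neg h, dif_pos ⟨hd, hdk⟩, ← Finset.sum_attach (range f.natDegree)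
    (fun j => f.coeff j * extSeq f m s (k - f.natDegree + j))]

lemma extSeq_ge0 {f : F2[X]} {m k : ℕ} {s : ℕ → F2} (h : ¬ k < m)
    (hd : f.natDegree = 0) : extSeq f m s k = 0 := by
  rw [extSeq, if_neg h, dif_neg (by omega)]

/-- the extension is annihilated by `f` provided the seed windows fully below `m` vanish. -/
lemma act_extSeq {f : F2[X]} (hf : f.Monic) {m : ℕ} (hm : f.natDegree ≤ m) {s : ℕ → F2}
    (hs : ∀ i, i + f.natDegree < m → act f s i = 0) :
    act f (extSeq f m s) = 0 := by
  set d := f.natDegree with hd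
  funext i
  show act f (extSeq f m s) i = 0
  by_cases hi : i + d < m
  · have : act f (extSeq f m s) i = act f s i := by
      apply act_congr
      intro j hj
      exact extSeq_lt (by omega)
    rw [this]
    exact hs i hi
  · push_neg at hi
    by_cases hd0 : d = 0
    · have hf1 : f = 1 := Monic.natDegree_eq_zero hf |>.mp hd0
      rw [hf1, act_one]
      exact extSeq_ge0 (by omega) natDegree_one
    · have hd0' : 0 < d := Nat.pos_of_ne_zero hd0
      rw [act_apply, Finset.sum_range_succ, ← hd]
      have htop : f.coeff d = 1 := hf
      rw [htop, one_mul]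
      have hrec : extSeq f m s (i + d) = ∑ j ∈ range d,
          f.coeff j * extSeq f m s (i + j) := by
        rw [extSeq_ge (by omega) hd0' (by omega)]
        apply Finset.sum_congr rfl
        intro j hj
        congr 2
        omega
      rw [hrec]
      rw [CharTwo.add_self_eq_zero]

/-- a full solution of the recurrence agreeing with the seed below `m ≥ deg f` equals
the extension. -/
lemma extSeq_eq_of_act_eq_zero {f : F2[X]} (hf : f.Monic) {m : ℕ} (hm : f.natDegree ≤ m)
    {s c : ℕ → F2} (hc : act f c = 0) (hsc : ∀ k, k < m → s k = c k) :
    extSeq f m s = c := by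
  set d := f.natDegree with hd
  funext k
  induction k using Nat.strong_induction_on with
  | _ k ih =>
    by_cases hk : k < m
    · rw [extSeq_lt hk]; exact hsc k hk
    · push_neg at hk
      by_cases hd0 : d = 0
      · have hf1 : f = 1 := Monic.natDegree_eq_zero hf |>.mp hd0
        rw [hf1, act_one] at hc
        rw [extSeq_ge0 (by omega) hd0, congrFun hc k]
        rfl
      · have hd0' : 0 < d := Nat.pos_of_ne_zero hd0
        rw [extSeq_ge (by omega) hd0' (by omega)]
        have hw : act f c (k - d) = 0 := congrFun hc (k - d)
        rw [act_apply, Finset.sum_range_succ, ← hd] at hw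
        have htop : f.coeff d = 1 := hf
        have hkd : k - d + d = k := by omega
        rw [htop, hkd, one_mul] at hw
        have hsum : ∑ j ∈ range d, f.coeff j * extSeq f m s (k - d + j)
            = ∑ j ∈ range d, f.coeff j * c (k - d + j) := by
          apply Finset.sum_congr rfl
          intro j hj
          have hj' := mem_range.mp hj
          rw [ih _ (by omega)]
        rw [hsum]
        -- hw : S + c k = 0, goal : S = c k  (char 2)
        have h2 : (∑ j ∈ range d, f.coeff j * c (k - d + j)) + c k + c k = 0 + c k := by
          rw [hw]
        rw [add_assoc, CharTwo.add_self_eq_zero, add_zero, zero_add] at h2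
        exact h2

/-- the minimal annihilator divides every annihilator. -/
lemma min_dvd {f g : F2[X]} {b : ℕ → F2} (hf : f ≠ 0) (hfb : act f b = 0)
    (hmin : ∀ g', g' ≠ 0 → act g' b = 0 → f.natDegree ≤ g'.natDegree)
    (hg : act g b = 0) : f ∣ g := by
  have hfm : f.Monic := F2.monic_of_ne_zero hf
  have hr : act (g %ₘ f) b = 0 := by
    rw [modByMonic_eq_sub_mul_div _ f, act_sub, mul_comm, act_mul, hfb, act_zero, hg,
      sub_zero]
  by_cases h0 : g %ₘ f = 0
  · exact (modByMonic_eq_zero_iff_dvd hfm).mp h0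
  · exfalso
    have h1 := hmin _ h0 hr
    have h2 : (g %ₘ f).degree < f.degree := degree_modByMonic_lt g hfm
    have h3 : (g %ₘ f).natDegree < f.natDegree := natDegree_lt_natDegree h0 h2
    omega

/-- the u-argument: if `f` is a monic annihilator of `b` with degree `≤ n` and `g`
annihilates the first `n` windows of `b`, then `g` annihilates all windows. -/
lemma ann_of_windows {f g : F2[X]} {b : ℕ → F2} (hf : f.Monic) (hfb : act f b = 0)
    {n : ℕ} (hdn : f.natDegree ≤ n) (hw : ∀ i, i < n → act g b i = 0) :
    act g b = 0 := by
  have hu : act f (act g b) = 0 := by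
    rw [← act_mul, mul_comm, act_mul, hfb, act_zero]
  exact act_eq_zero_seq_zero hf hu (fun k hk => hw k (by omega))

open Classical in
/-- existence of a minimal annihilator. -/
lemma exists_minAnn {A : F2[X] → Prop} (h : ∃ g, g ≠ 0 ∧ A g) :
    ∃ f, f ≠ 0 ∧ A f ∧ ∀ g, g ≠ 0 → A g → f.natDegree ≤ g.natDegree := by
  obtain ⟨g, hg, hAg⟩ := h
  have hP : ∃ d, ∃ g', g' ≠ 0 ∧ A g' ∧ g'.natDegree = d := ⟨g.natDegree, g, hg, hAg, rfl⟩
  obtain ⟨f, hf, hAf, hfd⟩ := Nat.find_spec hP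
  refine ⟨f, hf, hAf, fun g' hg' hAg' => ?_⟩
  rw [hfd]
  exact Nat.find_le ⟨g', hg', hAg', rfl⟩

/-- uniqueness of the minimal element (for a sub-closed annihilation predicate). -/
lemma min_unique {A : F2[X] → Prop} (Asub : ∀ p q, A p → A q → A (p - q))
    {f f' : F2[X]} (hf : f ≠ 0) (hf' : f' ≠ 0) (hAf : A f) (hAf' : A f')
    (hmin : ∀ g, g ≠ 0 → A g → f.natDegree ≤ g.natDegree)
    (hmin' : ∀ g, g ≠ 0 → A g → f'.natDegree ≤ g.natDegree) : f = f' := by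
  by_contra hne
  have hd : f.natDegree = f'.natDegree :=
    le_antisymm (hmin _ hf' hAf') (hmin' _ hf hAf)
  have hs0 : f - f' ≠ 0 := sub_ne_zero.mpr hne
  have hdeg : (f - f').degree < f.degree := by
    apply degree_sub_lt _ hf
    · rw [(F2.monic_of_ne_zero hf).leadingCoeff, (F2.monic_of_ne_zero hf').leadingCoeff]
    · rw [degree_eq_natDegree hf, degree_eq_natDegree hf', hd]
  have h3 : (f - f').natDegree < f.natDegree := natDegree_lt_natDegree hs0 hdeg
  have h4 := hmin _ hs0 (Asub _ _ hAf hAf')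
  omega

/-! ### windowed annihilators and tail polynomials -/

def AnnW (n : ℕ) (a : ℕ → F2) (g : F2[X]) : Prop := ∀ i, i < n → act g a i = 0

lemma AnnW_sub {n : ℕ} {a : ℕ → F2} {p q : F2[X]} (hp : AnnW n a p) (hq : AnnW n a q) :
    AnnW n a (p - q) := fun i hi => by
  rw [act_sub]
  simp [Pi.sub_apply, hp i hi, hq i hi]

def padN (n : ℕ) (a : Fin (2*n-1) → F2) : ℕ → F2 :=
  fun k => if h : k < 2*n-1 then a ⟨k, h⟩ else 0

def SingP (n : ℕ) (a : Fin (2*n-1) → F2) : Prop :=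
  ∃ g, g ≠ 0 ∧ g.natDegree < n ∧ AnnW n (padN n a) g

def tailPoly (e : ℕ) (t : ℕ → F2) : F2[X] :=
  X ^ e + ∑ i ∈ range e, C (t i) * X ^ i

lemma tailPoly_coeff_lt {e i : ℕ} (t : ℕ → F2) (h : i < e) :
    (tailPoly e t).coeff i = t i := by
  rw [tailPoly, coeff_add, coeff_X_pow, if_neg (by omega), finset_sum_coeff]
  rw [zero_add]
  rw [Finset.sum_eq_single i]
  · simp
  · intro j hj hne
    simp [coeff_C_mul, coeff_X_pow, Ne.symm hne]
  · intro hni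
    exact absurd (mem_range.mpr h) hni

lemma tailPoly_coeff_eq (e : ℕ) (t : ℕ → F2) : (tailPoly e t).coeff e = 1 := by
  rw [tailPoly, coeff_add, coeff_X_pow, if_pos rfl, finset_sum_coeff]
  have : ∀ j ∈ range e, (C (t j) * X ^ j).coeff e = 0 := by
    intro j hj
    have := mem_range.mp hj
    rw [coeff_C_mul, coeff_X_pow, if_neg (by omega : ¬ e = j), mul_zero]
  rw [Finset.sum_eq_zero this, add_zero]

lemma tailPoly_coeff_gt {e i : ℕ} (t : ℕ → F2) (h : e < i) :
    (tailPoly e t).coeff i = 0 := by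
  rw [tailPoly, coeff_add, coeff_X_pow, if_neg (by omega), finset_sum_coeff]
  have : ∀ j ∈ range e, (C (t j) * X ^ j).coeff i = 0 := by
    intro j hj
    have := mem_range.mp hj
    rw [coeff_C_mul, coeff_X_pow, if_neg (by omega : ¬ i = j), mul_zero]
  rw [Finset.sum_eq_zero this, add_zero]

lemma tailPoly_natDegree (e : ℕ) (t : ℕ → F2) : (tailPoly e t).natDegree = e := by
  apply le_antisymm
  · rw [natDegree_le_iff_coeff_eq_zero]
    intro m hm
    exact tailPoly_coeff_gt t hm
  · apply le_natDegree_of_ne_zero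
    rw [tailPoly_coeff_eq]
    exact one_ne_zero

lemma tailPoly_monic (e : ℕ) (t : ℕ → F2) : (tailPoly e t).Monic := by
  unfold Monic leadingCoeff
  rw [tailPoly_natDegree, tailPoly_coeff_eq]

lemma tailPoly_eq_of_monic {e : ℕ} {h : F2[X]} (hm : h.Monic) (hd : h.natDegree = e)
    {t : ℕ → F2} (ht : ∀ i, i < e → t i = h.coeff i) : tailPoly e t = h := by
  ext i
  rcases lt_trichotomy i e with hlt | rfl | hgt
  · rw [tailPoly_coeff_lt t hlt, ht i hlt]
  · rw [tailPoly_coeff_eq]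
    rw [← hd]
    exact (hm).symm
  · rw [tailPoly_coeff_gt t hgt]
    symm
    apply coeff_eq_zero_of_natDegree_lt
    omega

/-- canonical minimal element of an annihilation predicate -/
def minOf (A : F2[X] → Prop) (h : ∃ g, g ≠ 0 ∧ A g) : F2[X] :=
  (exists_minAnn h).choose

lemma minOf_spec (A : F2[X] → Prop) (h : ∃ g, g ≠ 0 ∧ A g) :
    minOf A h ≠ 0 ∧ A (minOf A h) ∧
      ∀ g, g ≠ 0 → A g → (minOf A h).natDegree ≤ g.natDegree :=
  (exists_minAnn h).choose_spec

/-! ### the forward construction (from a singular sequence) -/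

section Forward
variable {n : ℕ} {a : Fin (2*n-1) → F2}

lemma padN_lt {k : ℕ} (h : k < 2*n-1) (a : Fin (2*n-1) → F2) :
    padN n a k = a ⟨k, h⟩ := dif_pos h

def hexW (ha : SingP n a) : ∃ g, g ≠ 0 ∧ AnnW n (padN n a) g := by
  obtain ⟨g, h0, _, hA⟩ := ha
  exact ⟨g, h0, hA⟩

def fW (ha : SingP n a) : F2[X] := minOf _ (hexW ha)

lemma fW_ne (ha : SingP n a) : fW ha ≠ 0 := (minOf_spec _ _).1

lemma fW_monic (ha : SingP n a) : (fW ha).Monic := F2.monic_of_ne_zero (fW_ne ha)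

lemma fW_ann (ha : SingP n a) : AnnW n (padN n a) (fW ha) := (minOf_spec _ _).2.1

lemma fW_min (ha : SingP n a) : ∀ g, g ≠ 0 → AnnW n (padN n a) g →
    (fW ha).natDegree ≤ g.natDegree := (minOf_spec _ _).2.2

lemma fW_deg (ha : SingP n a) : (fW ha).natDegree < n := by
  obtain ⟨g, h0, hd, hA⟩ := id ha
  exact lt_of_le_of_lt (fW_min ha g h0 hA) hd

def bW (ha : SingP n a) : ℕ → F2 :=
  extSeq (fW ha) (n + (fW ha).natDegree) (padN n a)

lemma bW_ann (ha : SingP n a) : act (fW ha) (bW ha) = 0 := by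
  apply act_extSeq (fW_monic ha) (by omega)
  intro i hi
  exact fW_ann ha i (by omega)

lemma bW_eq_pad (ha : SingP n a) {k : ℕ} (hk : k < n + (fW ha).natDegree) :
    bW ha k = padN n a k := extSeq_lt hk

/-- the minimal windowed annihilator of `a` is also the minimal (full) annihilator
of the extension `bW`. -/
lemma fW_min_full (ha : SingP n a) : ∀ g, g ≠ 0 → act g (bW ha) = 0 →
    (fW ha).natDegree ≤ g.natDegree := by
  intro g hg0 hgb
  by_contra hlt
  push_neg at hlt
  have hAnn : AnnW n (padN n a) g := by
    intro i hi
    have : act g (padN n a) i = act g (bW ha) i := by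
      apply act_congr
      intro j hj
      exact (bW_eq_pad ha (by omega)).symm
    rw [this, hgb]
    rfl
  exact absurd (fW_min ha g hg0 hAnn) (by omega)

end Forward

/-! ### the backward construction (from a monic polynomial and a seed) -/

section Backward
variable {n : ℕ}

def padV (ν : ℕ) (β : Fin ν → F2) : ℕ → F2 :=
  fun k => if h : k < ν then β ⟨k, h⟩ else 0

variable {g : F2[X]} {β : Fin (n-1) → F2}

def cG (g : F2[X]) (β : Fin (n-1) → F2) : ℕ → F2 := extSeq g (n-1) (padV (n-1) β)

lemma cG_ann (hm : g.Monic) (hdeg : g.natDegree = n-1) : act g (cG g β) = 0 := by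
  apply act_extSeq hm (le_of_eq hdeg)
  intro i hi
  rw [hdeg] at hi
  omega

def fG (hm : g.Monic) (hdeg : g.natDegree = n-1) (β : Fin (n-1) → F2) : F2[X] :=
  minOf (fun p => act p (cG g β) = 0) ⟨g, hm.ne_zero, cG_ann hm hdeg⟩

lemma fG_ne (hm : g.Monic) (hdeg : g.natDegree = n-1) : fG hm hdeg β ≠ 0 :=
  (minOf_spec _ _).1

lemma fG_monic (hm : g.Monic) (hdeg : g.natDegree = n-1) : (fG hm hdeg β).Monic :=
  F2.monic_of_ne_zero (fG_ne hm hdeg)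

lemma fG_ann (hm : g.Monic) (hdeg : g.natDegree = n-1) :
    act (fG hm hdeg β) (cG g β) = 0 :=
  (minOf_spec (fun p => act p (cG g β) = 0) ⟨g, hm.ne_zero, cG_ann hm hdeg⟩).2.1

lemma fG_min (hm : g.Monic) (hdeg : g.natDegree = n-1) : ∀ p, p ≠ 0 →
    act p (cG g β) = 0 → (fG hm hdeg β).natDegree ≤ p.natDegree :=
  (minOf_spec (fun p => act p (cG g β) = 0) ⟨g, hm.ne_zero, cG_ann hm hdeg⟩).2.2

lemma fG_deg (hm : g.Monic) (hdeg : g.natDegree = n-1) :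
    (fG hm hdeg β).natDegree ≤ n-1 := by
  have := fG_min (β := β) hm hdeg g hm.ne_zero (cG_ann hm hdeg)
  omega

def hGp (hm : g.Monic) (hdeg : g.natDegree = n-1) (β : Fin (n-1) → F2) : F2[X] :=
  g /ₘ (fG hm hdeg β)

lemma g_eq_mul (hm : g.Monic) (hdeg : g.natDegree = n-1) :
    g = fG hm hdeg β * hGp hm hdeg β := by
  have hdvd : fG hm hdeg β ∣ g :=
    min_dvd (fG_ne hm hdeg) (fG_ann hm hdeg) (fG_min hm hdeg) (cG_ann hm hdeg)
  have h0 : g %ₘ (fG hm hdeg β) = 0 :=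
    (modByMonic_eq_zero_iff_dvd (fG_monic hm hdeg)).mpr hdvd
  have := modByMonic_add_div g (fG hm hdeg β)
  rw [h0, zero_add] at this
  exact this.symm

lemma hGp_ne (hm : g.Monic) (hdeg : g.natDegree = n-1) : hGp hm hdeg β ≠ 0 := by
  intro h0
  have := g_eq_mul (β := β) hm hdeg
  rw [h0, mul_zero] at this
  exact hm.ne_zero this

lemma hGp_monic (hm : g.Monic) (hdeg : g.natDegree = n-1) : (hGp hm hdeg β).Monic :=
  F2.monic_of_ne_zero (hGp_ne hm hdeg)

lemma hGp_deg (hm : g.Monic) (hdeg : g.natDegree = n-1) :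
    (hGp hm hdeg β).natDegree = (n-1) - (fG hm hdeg β).natDegree := by
  have h1 : g.natDegree = (fG hm hdeg β).natDegree + (hGp hm hdeg β).natDegree := by
    conv_lhs => rw [g_eq_mul (β := β) hm hdeg]
    exact natDegree_mul (fG_ne hm hdeg) (hGp_ne hm hdeg)
  omega

def aG (hn : 1 ≤ n) (hm : g.Monic) (hdeg : g.natDegree = n-1) (β : Fin (n-1) → F2) :
    Fin (2*n-1) → F2 :=
  fun k => if (k : ℕ) < n + (fG hm hdeg β).natDegree then cG g β k
    else (hGp hm hdeg β).coeff ((k : ℕ) - (n + (fG hm hdeg β).natDegree))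

lemma padN_aG_eq (hn : 1 ≤ n) (hm : g.Monic) (hdeg : g.natDegree = n-1)
    {k : ℕ} (hk : k < n + (fG hm hdeg β).natDegree) :
    padN n (aG hn hm hdeg β) k = cG g β k := by
  have hd := fG_deg (β := β) hm hdeg
  have hk2 : k < 2*n-1 := by omega
  rw [padN_lt hk2]
  unfold aG
  rw [if_pos hk]

lemma fG_annW (hn : 1 ≤ n) (hm : g.Monic) (hdeg : g.natDegree = n-1) :
    AnnW n (padN n (aG hn hm hdeg β)) (fG hm hdeg β) := by
  intro i hi
  have hd := fG_deg (β := β) hm hdeg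
  have : act (fG hm hdeg β) (padN n (aG hn hm hdeg β)) i
      = act (fG hm hdeg β) (cG g β) i := by
    apply act_congr
    intro j hj
    exact padN_aG_eq hn hm hdeg (by omega)
  rw [this, fG_ann hm hdeg]
  rfl

lemma aG_sing (hn : 1 ≤ n) (hm : g.Monic) (hdeg : g.natDegree = n-1) :
    SingP n (aG hn hm hdeg β) := by
  have hd := fG_deg (β := β) hm hdeg
  exact ⟨fG hm hdeg β, fG_ne hm hdeg, by omega, fG_annW hn hm hdeg⟩

/-- the minimal windowed annihilator of `aG` is `fG`. -/
lemma fG_minW (hn : 1 ≤ n) (hm : g.Monic) (hdeg : g.natDegree = n-1) :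
    ∀ p, p ≠ 0 → AnnW n (padN n (aG hn hm hdeg β)) p →
      (fG hm hdeg β).natDegree ≤ p.natDegree := by
  intro p hp0 hpA
  by_contra hlt
  push_neg at hlt
  have hwin : ∀ i, i < n → act p (cG g β) i = 0 := by
    intro i hi
    have : act p (cG g β) i = act p (padN n (aG hn hm hdeg β)) i := by
      apply act_congr
      intro j hj
      exact (padN_aG_eq hn hm hdeg (by omega)).symm
    rw [this]
    exact hpA i hi
  have hfull : act p (cG g β) = 0 := by
    apply ann_of_windows (fG_monic (β := β) hm hdeg) (fG_ann hm hdeg) _ hwin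
    have := fG_deg (β := β) hm hdeg
    omega
  exact absurd (fG_min hm hdeg p hp0 hfull) (by omega)

end Backward

/-! ### the bijection -/

section EquivSec
variable {n : ℕ}

def tailW {a : Fin (2*n-1) → F2} (ha : SingP n a) : F2[X] :=
  tailPoly ((n-1) - (fW ha).natDegree) (fun i => padN n a (n + (fW ha).natDegree + i))

def gW {a : Fin (2*n-1) → F2} (ha : SingP n a) : F2[X] := fW ha * tailW ha

lemma gW_monic {a : Fin (2*n-1) → F2} (ha : SingP n a) : (gW ha).Monic :=
  (fW_monic ha).mul (tailPoly_monic _ _)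

lemma gW_deg (hn : 1 ≤ n) {a : Fin (2*n-1) → F2} (ha : SingP n a) :
    (gW ha).natDegree = n-1 := by
  rw [gW, tailW, (fW_monic ha).natDegree_mul (tailPoly_monic _ _), tailPoly_natDegree]
  have := fW_deg ha
  omega

lemma act_gW_bW {a : Fin (2*n-1) → F2} (ha : SingP n a) : act (gW ha) (bW ha) = 0 := by
  rw [gW, mul_comm, act_mul, bW_ann, act_zero]

noncomputable def singEquiv (n : ℕ) (hn : 1 ≤ n) :
    {a : Fin (2*n-1) → F2 // SingP n a} ≃
      ({p : F2[X] // p.Monic ∧ p.natDegree = n-1} × (Fin (n-1) → F2)) where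
  toFun x := (⟨gW x.2, gW_monic x.2, gW_deg hn x.2⟩,
    fun i => x.1 ⟨i.val, by have := i.isLt; omega⟩)
  invFun y := ⟨aG hn y.1.2.1 y.1.2.2 y.2, aG_sing hn y.1.2.1 y.1.2.2⟩
  left_inv := by
    rintro ⟨a, ha⟩
    apply Subtype.ext
    dsimp only
    set f := fW ha with hfdef
    set d := (fW ha).natDegree with hddef
    set β : Fin (n-1) → F2 := fun i => a ⟨i.val, by have := i.isLt; omega⟩ with hβ
    have hdn : d < n := fW_deg ha
    -- step 1 : cG (gW ha) β = bW ha
    have hcb : cG (gW ha) β = bW ha := by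
      apply extSeq_eq_of_act_eq_zero (gW_monic ha) (le_of_eq (gW_deg hn ha)) (act_gW_bW ha)
      intro k hk
      have hk2 : k < 2*n-1 := by omega
      rw [bW_eq_pad ha (by omega), padN_lt hk2]
      unfold padV
      rw [dif_pos hk]
    -- step 2 : the minimal annihilator is preserved
    have hfg : fG (gW_monic ha) (gW_deg hn ha) β = f := by
      apply min_unique (A := fun p => act p (bW ha) = 0)
        (fun p q hp hq => by rw [act_sub, hp, hq, sub_zero])
        (fG_ne _ _) (fW_ne ha)
      · have := fG_ann (β := β) (gW_monic ha) (gW_deg hn ha)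
        rwa [hcb] at this
      · exact bW_ann ha
      · intro p hp0 hpb
        exact fG_min (gW_monic ha) (gW_deg hn ha) p hp0 (by rwa [hcb])
      · exact fW_min_full ha
    -- step 3 : the cofactor is preserved
    have hh : hGp (gW_monic ha) (gW_deg hn ha) β = tailW ha := by
      have hgg := g_eq_mul (β := β) (gW_monic ha) (gW_deg hn ha)
      rw [hfg] at hgg
      have hgg2 : f * tailW ha = f * hGp (gW_monic ha) (gW_deg hn ha) β := by
        rw [← hgg]
        rfl
      exact (mul_left_cancel₀ (fW_ne ha) hgg2).symm
    -- step 4 : pointwise identification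
    funext k
    unfold aG
    rw [hfg, hh]
    by_cases hk : (k : ℕ) < n + d
    · rw [if_pos hk, hcb, bW_eq_pad ha hk, padN_lt k.isLt]
    · rw [if_neg hk]
      have hik : (k : ℕ) - (n + d) < (n-1) - d := by
        have := k.isLt
        omega
      unfold tailW
      rw [tailPoly_coeff_lt _ hik]
      have : n + d + ((k : ℕ) - (n + d)) = (k : ℕ) := by omega
      rw [this, padN_lt k.isLt]
  right_inv := by
    rintro ⟨⟨g, hm, hdeg⟩, β⟩
    set d := (fG hm hdeg β).natDegree with hddef
    have hd : d ≤ n - 1 := fG_deg hm hdeg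
    set a : Fin (2*n-1) → F2 := aG hn hm hdeg β with hadef
    have ha : SingP n a := aG_sing hn hm hdeg
    -- the minimal windowed annihilator of a is fG
    have hf : fW ha = fG hm hdeg β := by
      apply min_unique (A := AnnW n (padN n a)) (fun p q hp hq => AnnW_sub hp hq)
        (fW_ne ha) (fG_ne hm hdeg) (fW_ann ha) (fG_annW hn hm hdeg)
        (fW_min ha) (fG_minW hn hm hdeg)
    have hfd : (fW ha).natDegree = d := by rw [hf]
    -- the tail polynomial is the cofactor
    have htail : tailW ha = hGp hm hdeg β := by
      unfold tailW
      rw [hfd]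
      apply tailPoly_eq_of_monic (hGp_monic hm hdeg) (hGp_deg hm hdeg)
      intro i hi
      have h2 : n + d + i < 2*n-1 := by omega
      rw [padN_lt h2]
      show aG hn hm hdeg β _ = _
      unfold aG
      rw [if_neg (by simp only; omega)]
      congr 1
      simp only
      omega
    refine Prod.ext ?_ ?_
    · apply Subtype.ext
      show gW ha = g
      rw [gW, hf, htail]
      exact (g_eq_mul hm hdeg).symm
    · funext i
      show a ⟨i.val, _⟩ = β i
      have hi : (i : ℕ) < n - 1 := i.isLt
      have h1 : (i : ℕ) < n + d := by omega
      rw [hadef]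
      unfold aG
      simp only
      rw [if_pos h1]
      unfold cG
      rw [extSeq_lt hi]
      unfold padV
      rw [dif_pos hi]

end EquivSec

/-! ### counting -/

def monicEquiv (e : ℕ) : {p : F2[X] // p.Monic ∧ p.natDegree = e} ≃ (Fin e → F2) where
  toFun x i := x.1.coeff i
  invFun t := ⟨tailPoly e (padV e t), tailPoly_monic _ _, tailPoly_natDegree _ _⟩
  left_inv x := Subtype.ext (tailPoly_eq_of_monic x.2.1 x.2.2
    (fun i hi => by unfold padV; rw [dif_pos hi]))
  right_inv t := funext fun i => by
    show (tailPoly e (padV e t)).coeff i = t i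
    rw [tailPoly_coeff_lt _ i.isLt]
    unfold padV
    rw [dif_pos i.isLt]

lemma card_F2 : Nat.card F2 = 2 := by
  rw [Nat.card_eq_fintype_card, ZMod.card]

lemma card_fin_fun (e : ℕ) : Nat.card (Fin e → F2) = 2 ^ e := by
  rw [Nat.card_fun, card_F2, Nat.card_eq_fintype_card, Fintype.card_fin]

lemma card_sing {n : ℕ} (hn : 1 ≤ n) :
    Nat.card {a : Fin (2*n-1) → F2 // SingP n a} = 2 ^ (2*n-2) := by
  rw [Nat.card_congr (singEquiv n hn), Nat.card_prod, Nat.card_congr (monicEquiv (n-1)),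
    card_fin_fun, ← pow_add]
  congr 1
  omega

open Classical in
lemma card_nonsing {n : ℕ} (hn : 1 ≤ n) :
    Nat.card {a : Fin (2*n-1) → F2 // ¬ SingP n a} = 2 ^ (2*n-2) := by
  have htot : Nat.card (Fin (2*n-1) → F2) = 2^(2*n-1) := card_fin_fun _
  have hcompl : Nat.card {a : Fin (2*n-1) → F2 // ¬ SingP n a}
      = Nat.card (Fin (2*n-1) → F2) - Nat.card {a : Fin (2*n-1) → F2 // SingP n a} := by
    rw [Nat.card_eq_fintype_card, Nat.card_eq_fintype_card, Nat.card_eq_fintype_card]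
    exact Fintype.card_subtype_compl _
  rw [hcompl, htot, card_sing hn]
  have h2 : 2^(2*n-1) = 2 * 2^(2*n-2) := by
    rw [← pow_succ']
    congr 1
    omega
  omega

/-! ### matrices -/

section Glue
variable {n : ℕ}

def hank (n : ℕ) (a : Fin (2*n-1) → F2) : Matrix (Fin n) (Fin n) F2 :=
  fun i j => padN n a (i.val + j.val)

lemma hank_persym (a : Fin (2*n-1) → F2) : IsPersymmetric (hank n a) := by
  intro i i' j j' h
  unfold hank
  rw [h]

def readSeq (n : ℕ) (M : Matrix (Fin n) (Fin n) F2) : Fin (2*n-1) → F2 :=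
  fun k => M ⟨min k.val (n-1), by have := k.isLt; omega⟩
    ⟨k.val - min k.val (n-1), by have := k.isLt; omega⟩

lemma read_hank (a : Fin (2*n-1) → F2) : readSeq n (hank n a) = a := by
  funext k
  show padN n a (min (k:ℕ) (n-1) + ((k:ℕ) - min (k:ℕ) (n-1))) = a k
  have harg : min (k:ℕ) (n-1) + ((k:ℕ) - min (k:ℕ) (n-1)) = (k:ℕ) := by
    have := k.isLt; omega
  rw [harg, padN_lt k.isLt, Fin.eta]

lemma hank_read {M : Matrix (Fin n) (Fin n) F2} (hM : IsPersymmetric M) :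
    hank n (readSeq n M) = M := by
  funext i j
  have hij : i.val + j.val < 2*n-1 := by have := i.isLt; have := j.isLt; omega
  show padN n (readSeq n M) (i.val + j.val) = M i j
  rw [padN_lt hij]
  apply hM
  show min (i.val + j.val) (n-1) + ((i.val + j.val) - min (i.val + j.val) (n-1))
      = i.val + j.val
  have := i.isLt; have := j.isLt; omega

lemma rank_eq_card_iff {M : Matrix (Fin n) (Fin n) F2} :
    M.rank = n ↔ ∀ c, M.mulVec c = 0 → c = 0 := by
  have hfr : Module.finrank F2 (Fin n → F2) = n := by
    rw [Module.finrank_pi]; exact Fintype.card_fin n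
  constructor
  · intro hr c hc
    have hr' : Module.finrank F2 (LinearMap.range M.mulVecLin) = n := hr
    have hrange : LinearMap.range M.mulVecLin = ⊤ :=
      Submodule.eq_top_of_finrank_eq (by rw [hr', hfr])
    have hker := (LinearMap.ker_eq_bot_iff_range_eq_top_of_finrank_eq_finrank rfl).mpr hrange
    rw [LinearMap.ker_eq_bot'] at hker
    exact hker c (by rwa [Matrix.mulVecLin_apply])
  · intro h
    have hker : LinearMap.ker M.mulVecLin = ⊥ :=
      LinearMap.ker_eq_bot'.mpr (fun m hm => h m (by rwa [Matrix.mulVecLin_apply] at hm))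
    have hrange := (LinearMap.ker_eq_bot_iff_range_eq_top_of_finrank_eq_finrank rfl).mp hker
    show Module.finrank F2 (LinearMap.range M.mulVecLin) = n
    rw [hrange, finrank_top, hfr]

/-- the vector/polynomial correspondence for annihilators -/
lemma sing_iff (hn : 1 ≤ n) (a : Fin (2*n-1) → F2) :
    (∃ c : Fin n → F2, c ≠ 0 ∧ (hank n a).mulVec c = 0) ↔ SingP n a := by
  constructor
  · rintro ⟨c, hc0, hc⟩
    set p : F2[X] := ∑ j : Fin n, C (c j) * X ^ (j : ℕ) with hp
    have hcoeff : ∀ i : ℕ, p.coeff i = if h : i < n then c ⟨i, h⟩ else 0 := by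
      intro i
      rw [hp, finset_sum_coeff]
      by_cases h : i < n
      · rw [dif_pos h, Finset.sum_eq_single (⟨i, h⟩ : Fin n)]
        · simp [coeff_C_mul, coeff_X_pow]
        · intro j _ hne
          rw [coeff_C_mul, coeff_X_pow, if_neg (fun he => hne (by ext; simp [← he])), mul_zero]
        · intro hni
          exact absurd (Finset.mem_univ _) hni
      · rw [dif_neg h]
        apply Finset.sum_eq_zero
        intro j _
        rw [coeff_C_mul, coeff_X_pow, if_neg (by have := j.isLt; omega), mul_zero]
    have hdeg : p.natDegree < n := by
      have : p.natDegree ≤ n - 1 := by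
        rw [natDegree_le_iff_coeff_eq_zero]
        intro m hm
        rw [hcoeff m, dif_neg (by omega)]
      omega
    have hpne : p ≠ 0 := by
      intro h0
      apply hc0
      funext j
      have := hcoeff (j : ℕ)
      rw [h0, coeff_zero] at this
      rw [Pi.zero_apply]
      rw [dif_pos j.isLt] at this
      simpa using this.symm
    refine ⟨p, hpne, hdeg, ?_⟩
    intro i hi
    have hact : act p (padN n a) i
        = ∑ j ∈ range n, (if h : j < n then c ⟨j, h⟩ else 0) * padN n a (i + j) := by
      rw [act_apply_of_lt hdeg]
      exact Finset.sum_congr rfl fun j _ => by rw [hcoeff j]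
    have hfin : ∑ j ∈ range n, (if h : j < n then c ⟨j, h⟩ else 0) * padN n a (i + j)
        = ∑ j : Fin n, (if h : (j:ℕ) < n then c ⟨(j:ℕ), h⟩ else 0) * padN n a (i + (j:ℕ)) :=
      (Fin.sum_univ_eq_sum_range (fun j => (if h : j < n then c ⟨j, h⟩ else 0)
        * padN n a (i + j)) n).symm
    have hmv := congrFun hc ⟨i, hi⟩
    rw [Matrix.mulVec, Pi.zero_apply] at hmv
    rw [hact, hfin]
    rw [← hmv]
    apply Finset.sum_congr rfl
    intro j _
    rw [dif_pos j.isLt]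
    show c j * padN n a (i + (j:ℕ)) = _
    rw [mul_comm]
    rfl
  · rintro ⟨p, hp0, hdeg, hA⟩
    refine ⟨fun j => p.coeff (j : ℕ), ?_, ?_⟩
    · intro h0
      apply hp0
      rw [← leadingCoeff_eq_zero]
      have := congrFun h0 ⟨p.natDegree, by omega⟩
      simpa using this
    · funext i
      rw [Matrix.mulVec, Pi.zero_apply]
      have hwin := hA (i : ℕ) i.isLt
      rw [act_apply_of_lt hdeg] at hwin
      have hfs := Fin.sum_univ_eq_sum_range
        (fun j => p.coeff j * padN n a ((i:ℕ) + j)) n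
      rw [← hwin, ← hfs]
      show (∑ j : Fin n, hank n a i j * p.coeff (j:ℕ)) = _
      apply Finset.sum_congr rfl
      intro j _
      show padN n a ((i:ℕ) + (j:ℕ)) * p.coeff (j:ℕ) = _
      rw [mul_comm]

lemma rank_hank_iff (hn : 1 ≤ n) (a : Fin (2*n-1) → F2) :
    (hank n a).rank = n ↔ ¬ SingP n a := by
  rw [rank_eq_card_iff, ← sing_iff hn]
  constructor
  · rintro h ⟨c, hc0, hc⟩
    exact hc0 (h c hc)
  · intro h c hc
    by_contra hc0
    exact h ⟨c, hc0, hc⟩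

def persymEquiv (n : ℕ) :
    {M : Matrix (Fin n) (Fin n) F2 // IsPersymmetric M} ≃ (Fin (2*n-1) → F2) where
  toFun x := readSeq n x.1
  invFun a := ⟨hank n a, hank_persym a⟩
  left_inv x := Subtype.ext (hank_read x.2)
  right_inv a := read_hank a

def rankEquiv {n : ℕ} (hn : 1 ≤ n) :
    {M : Matrix (Fin n) (Fin n) F2 // IsPersymmetric M ∧ M.rank = n}
      ≃ {a : Fin (2*n-1) → F2 // ¬ SingP n a} where
  toFun x := ⟨readSeq n x.1, by
    rw [← rank_hank_iff hn, hank_read x.2.1]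
    exact x.2.2⟩
  invFun y := ⟨hank n y.1, hank_persym _, (rank_hank_iff hn _).mpr y.2⟩
  left_inv x := Subtype.ext (hank_read x.2.1)
  right_inv y := Subtype.ext (read_hank _)

end Glue


theorem persym_invertible_fraction (n : ℕ) (hn : 1 ≤ n) :
    persymRankCount n n n = 2 ^ (2 * n - 2) ∧ persymTotal n n = 2 ^ (2 * n - 1) := by
  constructor
  · rw [persymRankCount, Nat.card_congr (rankEquiv hn)]
    exact card_nonsing hn
  · rw [persymTotal, Nat.card_congr (persymEquiv n)]
    exact card_fin_fun _

end
end

section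
/- The number Γ_i^{[2;2]×k} of double persymmetric matrices of type [2;2]×k over F₂ of rank i equals: 1 for i = 0 and k ≥ 1; 9 for i = 1 and k > 1; 3·2^{k+1} + 30 for i = 2 and k > 2; 21·2^{k+1} − 168 for i = 3 and k > 3; and 2^{2k+2} − 3·2^{k+4} + 128 for i = 4 and k ≥ 4. -/
/-- A `(s+t) × k` matrix over `F₂` is double persymmetric of type `[s; t] × k` if its
top `s × k` block and its bottom `t × k` block are each constant along anti-diagonals. -/
def IsDoublePersymmetric (s t k : ℕ) (M : Matrix (Fin (s + t)) (Fin k) (ZMod 2)) : Prop :=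
  (∀ (a a' : Fin (s + t)) (b b' : Fin k), (a : ℕ) < s → (a' : ℕ) < s →
    (a : ℕ) + (b : ℕ) = (a' : ℕ) + (b' : ℕ) → M a b = M a' b') ∧
  (∀ (a a' : Fin (s + t)) (b b' : Fin k), s ≤ (a : ℕ) → s ≤ (a' : ℕ) →
    (a : ℕ) + (b : ℕ) = (a' : ℕ) + (b' : ℕ) → M a b = M a' b')

/-- `doublePersymRankCount s t k i` is the number of double persymmetric matrices of
type `[s; t] × k` over `F₂` of rank `i`. -/
noncomputable def doublePersymRankCount (s t k i : ℕ) : ℕ :=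
  Nat.card {M : Matrix (Fin (s + t)) (Fin k) (ZMod 2) //
    IsDoublePersymmetric s t k M ∧ M.rank = i}

namespace DP
open Finset

abbrev F2 : Type := ZMod 2
abbrev P2 : Type := F2 × F2
abbrev C4 : Type := P2 × P2

/-- linear form of a constraint on a consecutive pair of sequence values -/
def linC (c : C4) (u w : P2) : F2 :=
  u.1 * c.1.1 + w.1 * c.2.1 + u.2 * c.1.2 + w.2 * c.2.2

variable {k : ℕ}

/-- the double persymmetric matrix associated to a sequence -/
def mk (v : Fin (k+1) → P2) : Matrix (Fin (2+2)) (Fin k) F2 := fun a b =>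
  if (a : ℕ) = 0 then (v b.castSucc).1
  else if (a : ℕ) = 1 then (v b.succ).1
  else if (a : ℕ) = 2 then (v b.castSucc).2
  else (v b.succ).2

lemma mk_top (v : Fin (k+1) → P2) (a : Fin (2+2)) (b : Fin k) (ha : (a : ℕ) < 2)
    (j : Fin (k+1)) (hj : (j : ℕ) = (a : ℕ) + (b : ℕ)) : mk v a b = (v j).1 := by
  have h : (a : ℕ) = 0 ∨ (a : ℕ) = 1 := by omega
  rcases h with h | h
  · have hj' : j = b.castSucc := by apply Fin.ext; simp [hj, h]
    simp [mk, h, hj']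
  · have hj' : j = b.succ := by apply Fin.ext; simp [hj, h]; omega
    simp [mk, h, hj']

lemma mk_bot (v : Fin (k+1) → P2) (a : Fin (2+2)) (b : Fin k) (ha : 2 ≤ (a : ℕ))
    (j : Fin (k+1)) (hj : (j : ℕ) + 2 = (a : ℕ) + (b : ℕ)) : mk v a b = (v j).2 := by
  have h4 : (a : ℕ) < 4 := a.isLt
  have h : (a : ℕ) = 2 ∨ (a : ℕ) = 3 := by omega
  rcases h with h | h
  · have hj' : j = b.castSucc := by apply Fin.ext; simp [Fin.coe_castSucc]; omega
    simp [mk, h, hj']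
  · have hj' : j = b.succ := by apply Fin.ext; simp [Fin.val_succ]; omega
    simp [mk, h, hj']

lemma mk_persym (v : Fin (k+1) → P2) : IsDoublePersymmetric 2 2 k (mk v) := by
  constructor
  · intro a a' b b' ha ha' hsum
    have hb : (a : ℕ) + (b : ℕ) < k + 1 := by have := b.isLt; omega
    rw [mk_top v a b ha ⟨(a : ℕ) + (b : ℕ), hb⟩ rfl,
      mk_top v a' b' ha' ⟨(a : ℕ) + (b : ℕ), hb⟩ (by simpa using hsum)]
  · intro a a' b b' ha ha' hsum
    have h4 : (a : ℕ) < 4 := a.isLt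
    have hb : (a : ℕ) + (b : ℕ) - 2 < k + 1 := by have := b.isLt; omega
    rw [mk_bot v a b ha ⟨(a : ℕ) + (b : ℕ) - 2, hb⟩ (by simp; omega),
      mk_bot v a' b' ha' ⟨(a : ℕ) + (b : ℕ) - 2, hb⟩ (by simp; omega)]

/-- recover the sequence from the matrix -/
def unmk (hk : 0 < k) (M : Matrix (Fin (2+2)) (Fin k) F2) (j : Fin (k+1)) : P2 :=
  if h : (j : ℕ) < k then (M 0 ⟨j, h⟩, M 2 ⟨j, h⟩)
  else (M 1 ⟨k-1, by omega⟩, M 3 ⟨k-1, by omega⟩)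

lemma unmk_mk (hk : 0 < k) (v : Fin (k+1) → P2) : unmk hk (mk v) = v := by
  funext j
  unfold unmk
  by_cases h : (j : ℕ) < k
  · rw [dif_pos h]
    have h1 : mk v 0 ⟨j, h⟩ = (v j).1 := mk_top v 0 ⟨j, h⟩ (by norm_num) j (by simp)
    have h2 : mk v 2 ⟨j, h⟩ = (v j).2 := mk_bot v 2 ⟨j, h⟩ (by norm_num) j (by simp; omega)
    rw [h1, h2]
  · rw [dif_neg h]
    have hj : (j : ℕ) = k := by have := j.isLt; omega
    have h1 : mk v 1 ⟨k-1, by omega⟩ = (v j).1 :=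
      mk_top v 1 ⟨k-1, by omega⟩ (by norm_num) j (by simp; omega)
    have h2 : mk v 3 ⟨k-1, by omega⟩ = (v j).2 :=
      mk_bot v 3 ⟨k-1, by omega⟩ (by decide) j (by simp; omega)
    rw [h1, h2]

lemma mk_unmk (hk : 0 < k) (M : Matrix (Fin (2+2)) (Fin k) F2)
    (hM : IsDoublePersymmetric 2 2 k M) : mk (unmk hk M) = M := by
  funext a b
  have h4 : (a : ℕ) < 4 := a.isLt
  have hbk := b.isLt
  by_cases ha : (a : ℕ) < 2
  · rw [mk_top (unmk hk M) a b ha ⟨(a : ℕ) + (b : ℕ), by omega⟩ rfl]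
    unfold unmk
    by_cases h : ((⟨(a : ℕ) + (b : ℕ), by omega⟩ : Fin (k+1)) : ℕ) < k
    · rw [dif_pos h]
      exact hM.1 0 a ⟨(a : ℕ) + (b : ℕ), h⟩ b (by norm_num) ha (by simp)
    · rw [dif_neg h]
      simp only at h
      exact hM.1 1 a ⟨k-1, by omega⟩ b (by norm_num) ha (by simp; omega)
  · rw [mk_bot (unmk hk M) a b (by omega) ⟨(a : ℕ) + (b : ℕ) - 2, by omega⟩ (by simp; omega)]
    unfold unmk
    by_cases h : ((⟨(a : ℕ) + (b : ℕ) - 2, by omega⟩ : Fin (k+1)) : ℕ) < k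
    · rw [dif_pos h]
      exact hM.2 2 a ⟨(a : ℕ) + (b : ℕ) - 2, h⟩ b (by norm_num) (by omega) (by simp; omega)
    · rw [dif_neg h]
      simp only at h
      exact hM.2 3 a ⟨k-1, by omega⟩ b (by decide) (by omega) (by simp; omega)

lemma count_eq (hk : 0 < k) (i : ℕ) :
    doublePersymRankCount 2 2 k i = Nat.card {v : Fin (k+1) → P2 // (mk v).rank = i} := by
  rw [doublePersymRankCount]
  apply Nat.card_congr
  exact {
    toFun := fun M => ⟨unmk hk M.1, by
      rw [show mk (unmk hk M.1) = M.1 from mk_unmk hk M.1 M.2.1]; exact M.2.2⟩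
    invFun := fun v => ⟨mk v.1, mk_persym v.1, v.2⟩
    left_inv := fun M => by
      apply Subtype.ext; exact mk_unmk hk M.1 M.2.1
    right_inv := fun v => by
      apply Subtype.ext; exact unmk_mk hk v.1 }

end DP

-- appended to part1
namespace DP
open Finset Matrix
variable {k : ℕ}

/-- constraint as a vector in `Fin 4 → F2` -/
def cF (c : C4) : Fin (2+2) → F2 := fun a =>
  if (a : ℕ) = 0 then c.1.1 else if (a : ℕ) = 1 then c.2.1
  else if (a : ℕ) = 2 then c.1.2 else c.2.2

def RelP (v : Fin (k+1) → P2) (c : C4) : Prop :=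
  ∀ j : Fin k, linC c (v j.castSucc) (v j.succ) = 0

instance (v : Fin (k+1) → P2) : DecidablePred (RelP v) := fun c => by
  unfold RelP; infer_instance

def RelF (v : Fin (k+1) → P2) : Finset C4 := univ.filter (RelP v)

lemma mulVec_eq (v : Fin (k+1) → P2) (c : C4) (j : Fin k) :
    ((mk v)ᵀ *ᵥ (cF c)) j = linC c (v j.castSucc) (v j.succ) := by
  have e0 : mk v 0 j = (v j.castSucc).1 := rfl
  have e1 : mk v 1 j = (v j.succ).1 := rfl
  have e2 : mk v 2 j = (v j.castSucc).2 := rfl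
  have e3 : mk v 3 j = (v j.succ).2 := rfl
  have c0 : cF c 0 = c.1.1 := rfl
  have c1 : cF c 1 = c.2.1 := rfl
  have c2 : cF c 2 = c.1.2 := rfl
  have c3 : cF c 3 = c.2.2 := rfl
  show ∑ a : Fin (2+2), (mk v)ᵀ j a * cF c a = _
  rw [Fin.sum_univ_four]
  simp only [Matrix.transpose_apply]
  rw [e0, e1, e2, e3, c0, c1, c2, c3, linC]

lemma mulVec_zero_iff (v : Fin (k+1) → P2) (c : C4) :
    (mk v)ᵀ *ᵥ (cF c) = 0 ↔ RelP v c := by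
  rw [funext_iff]
  constructor
  · intro h j; rw [← mulVec_eq v c j]; exact h j
  · intro h j; rw [mulVec_eq v c j]; exact h j

lemma cF_expand (x : C4) : x = ((cF x 0, cF x 2), (cF x 1, cF x 3)) := rfl

lemma cF_injective : Function.Injective cF :=
  Function.LeftInverse.injective
    (g := fun x => ((x 0, x 2), (x 1, x 3))) (fun _ => rfl)

lemma rank_le_four (v : Fin (k+1) → P2) : (mk v).rank ≤ 4 := by
  have := (mk v).rank_le_card_height
  simpa using this

lemma relF_card (v : Fin (k+1) → P2) : (RelF v).card = 2 ^ (4 - (mk v).rank) := by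
  classical
  set L := (mk v)ᵀ.mulVecLin with hL
  haveI : Fintype (LinearMap.ker L) := Fintype.ofFinite _
  have hrange : Module.finrank F2 (LinearMap.range L) = (mk v).rank := by
    rw [← Matrix.rank_transpose (mk v)]; rfl
  have hrn := LinearMap.finrank_range_add_finrank_ker L
  rw [show Module.finrank F2 (Fin (2+2) → F2) = 4 by
    rw [Module.finrank_fin_fun], hrange] at hrn
  have hker : Module.finrank F2 (LinearMap.ker L) = 4 - (mk v).rank := by omega
  have hcard : Fintype.card (LinearMap.ker L) = 2 ^ (4 - (mk v).rank) := by
    rw [← hker]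
    have := Module.card_eq_pow_finrank (K := F2) (V := LinearMap.ker L)
    rwa [ZMod.card] at this
  rw [← hcard, ← Fintype.card_coe (RelF v)]
  apply Fintype.card_congr
  refine Equiv.ofBijective (fun c => ⟨cF c.1, ?_⟩) ⟨?_, ?_⟩
  · rw [LinearMap.mem_ker, hL, Matrix.mulVecLin_apply, mulVec_zero_iff]
    have hc := c.2
    simp only [RelF, mem_filter, mem_univ, true_and] at hc
    exact hc
  · intro c c' h
    apply Subtype.ext
    exact cF_injective (congrArg Subtype.val h)
  · rintro ⟨x, hx⟩
    refine ⟨⟨((x 0, x 2), (x 1, x 3)), ?_⟩, ?_⟩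
    · simp only [RelF, mem_filter, mem_univ, true_and]
      rw [← mulVec_zero_iff]
      have hcf : cF ((x 0, x 2), (x 1, x 3)) = x := by
        funext a
        fin_cases a <;> rfl
      rw [hcf]
      rw [LinearMap.mem_ker, hL, Matrix.mulVecLin_apply] at hx
      exact hx
    · apply Subtype.ext
      funext a
      fin_cases a <;> rfl

end DP
namespace DP
open Finset

/-- all constraints in `L` hold along the sequence `v` -/
def okL (L : List C4) {n : ℕ} (v : Fin (n+1) → P2) : Prop :=
  ∀ c ∈ L, ∀ j : Fin n, linC c (v j.castSucc) (v j.succ) = 0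

instance (L : List C4) (n : ℕ) : DecidablePred (okL L (n := n)) := fun v => by
  unfold okL; infer_instance

def cntSet (L : List C4) (n : ℕ) (u : P2) : Finset (Fin (n+1) → P2) :=
  univ.filter (fun v => okL L v ∧ v (Fin.last n) = u)

lemma okL_snoc (L : List C4) {n : ℕ} (v : Fin (n+1) → P2) (w : P2) :
    okL L (Fin.snoc v w : Fin (n+1+1) → P2) ↔
      okL L v ∧ ∀ c ∈ L, linC c (v (Fin.last n)) w = 0 := by
  constructor
  · intro h
    refine ⟨fun c hc j => ?_, fun c hc => ?_⟩
    · have := h c hc j.castSucc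
      rwa [Fin.succ_castSucc, Fin.snoc_castSucc, Fin.snoc_castSucc] at this
    · have := h c hc (Fin.last n)
      rwa [Fin.succ_last, Fin.snoc_last, Fin.snoc_castSucc] at this
  · rintro ⟨h1, h2⟩ c hc j
    induction j using Fin.lastCases with
    | last => rw [Fin.succ_last, Fin.snoc_last, Fin.snoc_castSucc]; exact h2 c hc
    | cast i => rw [Fin.succ_castSucc, Fin.snoc_castSucc, Fin.snoc_castSucc]; exact h1 c hc i

/-- transfer-matrix count -/
def cntIter (L : List C4) : ℕ → P2 → ℕ
  | 0 => fun _ => 1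
  | n+1 => fun w => ∑ u : P2, if ∀ c ∈ L, linC c u w = 0 then cntIter L n u else 0

lemma cntSet_card (L : List C4) (n : ℕ) (u : P2) :
    (cntSet L n u).card = cntIter L n u := by
  induction n generalizing u with
  | zero =>
    rw [show cntIter L 0 u = 1 from rfl]
    rw [Finset.card_eq_one]
    refine ⟨fun _ => u, ?_⟩
    ext v
    simp only [cntSet, mem_filter, mem_univ, true_and, mem_singleton]
    constructor
    · rintro ⟨-, hlast⟩
      funext j
      rw [show j = Fin.last 0 from Fin.ext (by omega)]
      exact hlast
    · rintro rfl
      exact ⟨fun c hc j => j.elim0, rfl⟩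
  | succ n ih =>
    have hset : cntSet L (n+1) u =
        (univ.filter (fun u' : P2 => ∀ c ∈ L, linC c u' u = 0)).biUnion
          (fun u' => (cntSet L n u').image (fun v => Fin.snoc v u)) := by
      ext V
      simp only [cntSet, mem_filter, mem_univ, true_and, mem_biUnion, mem_image]
      constructor
      · rintro ⟨hok, hlast⟩
        have hV : V = Fin.snoc (Fin.init V) u := by
          rw [← hlast]; exact (Fin.snoc_init_self V).symm
        rw [hV] at hok
        rw [okL_snoc] at hok
        exact ⟨Fin.init V (Fin.last n), hok.2, Fin.init V, ⟨hok.1, rfl⟩, hV.symm⟩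
      · rintro ⟨u', hu', v, ⟨hok, hlast⟩, rfl⟩
        refine ⟨?_, Fin.snoc_last _ _⟩
        rw [okL_snoc]
        exact ⟨hok, by rw [hlast]; exact hu'⟩
    rw [hset, Finset.card_biUnion]
    · rw [show cntIter L (n+1) u
          = ∑ u' : P2, if ∀ c ∈ L, linC c u' u = 0 then cntIter L n u' else 0 from rfl]
      rw [Finset.sum_filter]
      apply Finset.sum_congr rfl
      intro u' _
      by_cases h : ∀ c ∈ L, linC c u' u = 0
      · rw [if_pos h, if_pos h, Finset.card_image_of_injective _ (fun a b hab => ?_), ih]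
        have := congrArg Fin.init hab
        rwa [Fin.init_snoc, Fin.init_snoc] at this
      · rw [if_neg h, if_neg h]
    · intro x _ y _ hxy
      apply Finset.disjoint_left.mpr
      rintro V hVx hVy
      apply hxy
      simp only [mem_image, cntSet, mem_filter, mem_univ, true_and] at hVx hVy
      obtain ⟨v1, ⟨-, h1⟩, hV1⟩ := hVx
      obtain ⟨v2, ⟨-, h2⟩, hV2⟩ := hVy
      have e1 : Fin.init V = v1 := by rw [← hV1, Fin.init_snoc]
      have e2 : Fin.init V = v2 := by rw [← hV2, Fin.init_snoc]
      rw [← h1, ← h2, ← e1, ← e2]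

/-- total number of sequences of length `n+1` satisfying all constraints in `L` -/
lemma okL_card (L : List C4) (n : ℕ) :
    (univ.filter (fun v : Fin (n+1) → P2 => okL L v)).card = ∑ u : P2, cntIter L n u := by
  rw [Finset.card_eq_sum_card_fiberwise
    (f := fun v : Fin (n+1) → P2 => v (Fin.last n)) (t := univ) (fun x _ => mem_univ _)]
  apply Finset.sum_congr rfl
  intro u _
  rw [← cntSet_card, cntSet, Finset.filter_filter]

end DP
namespace DP
open Finset

def encP (u : P2) : ℕ := u.1.val + 2 * u.2.val
def eIdx (u w : P2) : ℕ := encP u + 4 * encP w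
def encC (c : C4) : ℕ := encP c.1 + 4 * encP c.2

def mask1N : List ℕ := [65535, 21845, 13107, 39321, 3855, 42405, 50115, 26985,
  255, 43605, 52275, 26265, 61455, 23205, 15555, 38505]

def maskOf (L : List C4) : ℕ :=
  L.foldr (fun c m => Nat.land (mask1N.getD (encC c) 0) m) 65535

lemma testBit_mask1 : ∀ (c : C4) (u w : P2),
    Nat.testBit (mask1N.getD (encC c) 0) (eIdx u w) = decide (linC c u w = 0) := by decide

lemma eIdx_lt (u w : P2) : eIdx u w < 16 := by
  revert u w; decide

lemma testBit_maskOf (L : List C4) (u w : P2) :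
    Nat.testBit (maskOf L) (eIdx u w) = true ↔ ∀ c ∈ L, linC c u w = 0 := by
  induction L with
  | nil =>
    simp only [List.not_mem_nil, false_implies, implies_true, iff_true]
    rw [show maskOf [] = 2 ^ 16 - 1 from rfl, Nat.testBit_two_pow_sub_one]
    simpa using eIdx_lt u w
  | cons c L ih =>
    rw [show maskOf (c :: L) = (mask1N.getD (encC c) 0) &&& (maskOf L) from rfl]
    rw [Nat.testBit_land, Bool.and_eq_true, testBit_mask1 c u w]
    simp only [decide_eq_true_eq, List.forall_mem_cons, ih]

def cntM (m : ℕ) : ℕ → P2 → ℕ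
  | 0 => fun _ => 1
  | n+1 => fun w => ∑ u : P2, if Nat.testBit m (eIdx u w) then cntM m n u else 0

lemma cntIter_eq_cntM (L : List C4) (n : ℕ) : cntIter L n = cntM (maskOf L) n := by
  induction n with
  | zero => rfl
  | succ n ih =>
    funext w
    show (∑ u : P2, if ∀ c ∈ L, linC c u w = 0 then cntIter L n u else 0) = _
    apply Finset.sum_congr rfl
    intro u _
    rw [ih]
    exact if_congr (testBit_maskOf L u w).symm rfl rfl

def AAm (m : ℕ) (u : P2) : ℕ := (cntM m 4 u + 2 * cntM m 2 u - 3 * cntM m 3 u) / 96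
def BBm (m : ℕ) (u : P2) : ℕ := (5 * cntM m 3 u - (4 * cntM m 2 u + cntM m 4 u)) / 8
def CCm (m : ℕ) (u : P2) : ℕ := cntM m 2 u - 16 * AAm m u - 4 * BBm m u

def goodM (m : ℕ) : Prop :=
  (∀ u : P2, cntM m 2 u = AAm m u * 4 ^ 2 + BBm m u * 2 ^ 2 + CCm m u)
  ∧ (∀ w : P2, (∑ u : P2, if Nat.testBit m (eIdx u w) then AAm m u else 0) = 4 * AAm m w)
  ∧ (∀ w : P2, (∑ u : P2, if Nat.testBit m (eIdx u w) then BBm m u else 0) = 2 * BBm m w)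
  ∧ (∀ w : P2, (∑ u : P2, if Nat.testBit m (eIdx u w) then CCm m u else 0) = CCm m w)

instance : DecidablePred goodM := fun m => by unfold goodM; infer_instance

lemma cntM_closed (m : ℕ) (hg : goodM m) :
    ∀ n, 2 ≤ n → ∀ u, cntM m n u = AAm m u * 4 ^ n + BBm m u * 2 ^ n + CCm m u := by
  intro n
  induction n with
  | zero => omega
  | succ n ih =>
    intro hn u
    rcases Nat.lt_or_ge n 2 with h | h
    · have hn1 : n = 1 := by omega
      subst hn1
      exact hg.1 u
    · have key : ∀ u' : P2, (if Nat.testBit m (eIdx u' u) then cntM m n u' else 0)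
          = (if Nat.testBit m (eIdx u' u) then AAm m u' else 0) * 4 ^ n
            + (if Nat.testBit m (eIdx u' u) then BBm m u' else 0) * 2 ^ n
            + (if Nat.testBit m (eIdx u' u) then CCm m u' else 0) := by
        intro u'
        by_cases hb : Nat.testBit m (eIdx u' u) <;> simp [hb, ih h u']
      show (∑ u' : P2, if Nat.testBit m (eIdx u' u) then cntM m n u' else 0) = _
      rw [Finset.sum_congr rfl (fun u' _ => key u')]
      rw [Finset.sum_add_distrib, Finset.sum_add_distrib, ← Finset.sum_mul, ← Finset.sum_mul]
      rw [hg.2.1 u, hg.2.2.1 u, hg.2.2.2 u]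
      ring

def sAM (m : ℕ) : ℕ := ∑ u : P2, AAm m u
def sBM (m : ℕ) : ℕ := ∑ u : P2, BBm m u
def sCM (m : ℕ) : ℕ := ∑ u : P2, CCm m u

lemma tot_closed (L : List C4) (hg : goodM (maskOf L)) (n : ℕ) (hn : 2 ≤ n) :
    (univ.filter (fun v : Fin (n+1) → P2 => okL L v)).card
      = sAM (maskOf L) * 4 ^ n + sBM (maskOf L) * 2 ^ n + sCM (maskOf L) := by
  rw [okL_card]
  simp only [cntIter_eq_cntM]
  rw [Finset.sum_congr rfl (fun u _ => cntM_closed _ hg n hn u)]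
  rw [Finset.sum_add_distrib, Finset.sum_add_distrib, ← Finset.sum_mul, ← Finset.sum_mul]
  rfl

end DP
namespace DP
open Finset

def maskList : List ℕ := [3, 5, 9, 15, 17, 33, 51, 65, 85, 105, 129, 153, 165, 195, 255,
  257, 513, 771, 1025, 1285, 1545, 2049, 2313, 2565, 3075, 3855, 4097, 4369, 4641, 5185,
  6273, 8193, 8481, 8721, 9345, 10305, 12291, 13107, 15555, 16385, 16705, 17025, 17425,
  18465, 20485, 21845, 23205, 24585, 26265, 26985, 32769, 33153, 33345, 33825, 34833,
  36873, 38505, 39321, 40965, 42405, 43605, 49155, 50115, 52275, 61455, 65535]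

def maskData : List (ℕ × ℕ × ℕ × ℕ) := [(3, 0, 0, 2), (5, 0, 0, 2), (9, 0, 0, 2),
  (15, 0, 0, 4), (17, 0, 0, 2), (33, 0, 0, 2), (51, 0, 2, 0), (65, 0, 0, 1), (85, 0, 0, 4),
  (105, 0, 0, 4), (129, 0, 0, 1), (153, 0, 0, 4), (165, 0, 0, 4), (195, 0, 0, 4),
  (255, 0, 4, 0), (257, 0, 0, 2), (513, 0, 0, 1), (771, 0, 0, 4), (1025, 0, 0, 2),
  (1285, 0, 2, 0), (1545, 0, 0, 4), (2049, 0, 0, 1), (2313, 0, 0, 4), (2565, 0, 0, 4),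
  (3075, 0, 0, 4), (3855, 0, 4, 0), (4097, 0, 0, 2), (4369, 0, 0, 4), (4641, 0, 0, 4),
  (5185, 0, 0, 4), (6273, 0, 0, 4), (8193, 0, 0, 1), (8481, 0, 0, 4), (8721, 0, 0, 4),
  (9345, 0, 0, 4), (10305, 0, 0, 4), (12291, 0, 0, 4), (13107, 0, 4, 0), (15555, 0, 4, 0),
  (16385, 0, 0, 1), (16705, 0, 0, 4), (17025, 0, 0, 4), (17425, 0, 0, 4), (18465, 0, 0, 4),
  (20485, 0, 0, 4), (21845, 0, 4, 0), (23205, 0, 4, 0), (24585, 0, 0, 4), (26265, 0, 4, 0),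
  (26985, 0, 4, 0), (32769, 0, 0, 2), (33153, 0, 0, 4), (33345, 0, 0, 4), (33825, 0, 0, 4),
  (34833, 0, 0, 4), (36873, 0, 2, 0), (38505, 0, 4, 0), (39321, 0, 4, 0), (40965, 0, 0, 4),
  (42405, 0, 4, 0), (43605, 0, 4, 0), (49155, 0, 0, 4), (50115, 0, 4, 0), (52275, 0, 4, 0),
  (61455, 0, 4, 0), (65535, 4, 0, 0)]

def lkA (m : ℕ) : ℕ := (((maskData.find? (fun p => p.1 = m))).map (fun p => p.2.1)).getD 0
def lkB (m : ℕ) : ℕ := (((maskData.find? (fun p => p.1 = m))).map (fun p => p.2.2.1)).getD 0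
def lkC (m : ℕ) : ℕ := (((maskData.find? (fun p => p.1 = m))).map (fun p => p.2.2.2)).getD 0

set_option maxHeartbeats 4000000 in
lemma dGood : ∀ m ∈ maskList, goodM m ∧ sAM m = lkA m ∧ sBM m = lkB m ∧ sCM m = lkC m := by
  decide

end DP
namespace DP
open Finset

set_option maxHeartbeats 4000000 in
lemma dMem1 : ∀ c : C4, maskOf [c] ∈ maskList := by decide

set_option maxHeartbeats 8000000 in
lemma dMem2 : ∀ c1 c2 : C4, maskOf [c1, c2] ∈ maskList := by decide

set_option maxHeartbeats 40000000 in
lemma dMem3 : ∀ c1 c2 c3 : C4, maskOf [c1, c2, c3] ∈ maskList := by decide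

set_option maxHeartbeats 4000000 in
lemma dSum1 : (∑ c : C4, lkA (maskOf [c])) = 4 ∧ (∑ c : C4, lkB (maskOf [c])) = 60
    ∧ (∑ c : C4, lkC (maskOf [c])) = 0 := by decide

set_option maxHeartbeats 8000000 in
lemma dSum2 : (∑ c1 : C4, ∑ c2 : C4, lkA (maskOf [c1, c2])) = 4
    ∧ (∑ c1 : C4, ∑ c2 : C4, lkB (maskOf [c1, c2])) = 216
    ∧ (∑ c1 : C4, ∑ c2 : C4, lkC (maskOf [c1, c2])) = 768 := by decide

set_option maxHeartbeats 40000000 in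
lemma dSum3 : (∑ c1 : C4, ∑ c2 : C4, ∑ c3 : C4, lkA (maskOf [c1, c2, c3])) = 4
    ∧ (∑ c1 : C4, ∑ c2 : C4, ∑ c3 : C4, lkB (maskOf [c1, c2, c3])) = 672
    ∧ (∑ c1 : C4, ∑ c2 : C4, ∑ c3 : C4, lkC (maskOf [c1, c2, c3])) = 9408 := by decide

end DP
namespace DP
open Finset

lemma booleMul (P Q : Prop) [Decidable P] [Decidable Q] :
    (if P then (1:ℕ) else 0) * (if Q then 1 else 0) = if P ∧ Q then 1 else 0 := by
  by_cases hP : P <;> by_cases hQ : Q <;> simp [hP, hQ]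

lemma okL_one {k : ℕ} (c : C4) (v : Fin (k+1) → P2) : okL [c] v ↔ RelP v c := by
  simp [okL, RelP]

lemma okL_two {k : ℕ} (c1 c2 : C4) (v : Fin (k+1) → P2) :
    okL [c1, c2] v ↔ RelP v c1 ∧ RelP v c2 := by
  simp [okL, RelP, List.forall_mem_cons]

lemma okL_three {k : ℕ} (c1 c2 c3 : C4) (v : Fin (k+1) → P2) :
    okL [c1, c2, c3] v ↔ RelP v c1 ∧ RelP v c2 ∧ RelP v c3 := by
  simp [okL, RelP, List.forall_mem_cons]

lemma relF_card_eq {k : ℕ} (v : Fin (k+1) → P2) :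
    (RelF v).card = ∑ c : C4, if RelP v c then 1 else 0 := by
  rw [RelF, Finset.card_filter]

lemma closed1 {k : ℕ} (hk : 2 ≤ k) (c : C4) :
    (univ.filter (fun v : Fin (k+1) → P2 => okL [c] v)).card
      = lkA (maskOf [c]) * 4 ^ k + lkB (maskOf [c]) * 2 ^ k + lkC (maskOf [c]) := by
  obtain ⟨hg, hA, hB, hC⟩ := dGood _ (dMem1 c)
  rw [tot_closed _ hg k hk, hA, hB, hC]

lemma closed2 {k : ℕ} (hk : 2 ≤ k) (c1 c2 : C4) :
    (univ.filter (fun v : Fin (k+1) → P2 => okL [c1, c2] v)).card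
      = lkA (maskOf [c1, c2]) * 4 ^ k + lkB (maskOf [c1, c2]) * 2 ^ k + lkC (maskOf [c1, c2]) := by
  obtain ⟨hg, hA, hB, hC⟩ := dGood _ (dMem2 c1 c2)
  rw [tot_closed _ hg k hk, hA, hB, hC]

lemma closed3 {k : ℕ} (hk : 2 ≤ k) (c1 c2 c3 : C4) :
    (univ.filter (fun v : Fin (k+1) → P2 => okL [c1, c2, c3] v)).card
      = lkA (maskOf [c1, c2, c3]) * 4 ^ k + lkB (maskOf [c1, c2, c3]) * 2 ^ k
        + lkC (maskOf [c1, c2, c3]) := by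
  obtain ⟨hg, hA, hB, hC⟩ := dGood _ (dMem3 c1 c2 c3)
  rw [tot_closed _ hg k hk, hA, hB, hC]

lemma moment1 {k : ℕ} (hk : 2 ≤ k) :
    ∑ v : Fin (k+1) → P2, (RelF v).card = 4 * 4 ^ k + 60 * 2 ^ k := by
  have swap : ∑ v : Fin (k+1) → P2, (RelF v).card
      = ∑ c : C4, (univ.filter (fun v : Fin (k+1) → P2 => okL [c] v)).card := by
    simp only [relF_card_eq]
    rw [Finset.sum_comm]
    refine Finset.sum_congr rfl (fun c _ => ?_)
    rw [Finset.card_filter]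
    exact Finset.sum_congr rfl (fun v _ => if_congr (okL_one c v).symm rfl rfl)
  rw [swap, Finset.sum_congr rfl (fun c _ => closed1 hk c)]
  rw [Finset.sum_add_distrib, Finset.sum_add_distrib, ← Finset.sum_mul, ← Finset.sum_mul]
  rw [dSum1.1, dSum1.2.1, dSum1.2.2]
  ring

lemma moment2 {k : ℕ} (hk : 2 ≤ k) :
    ∑ v : Fin (k+1) → P2, (RelF v).card ^ 2 = 4 * 4 ^ k + 216 * 2 ^ k + 768 := by
  have swap : ∑ v : Fin (k+1) → P2, (RelF v).card ^ 2
      = ∑ c1 : C4, ∑ c2 : C4,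
          (univ.filter (fun v : Fin (k+1) → P2 => okL [c1, c2] v)).card := by
    have expand : ∀ v : Fin (k+1) → P2, (RelF v).card ^ 2
        = ∑ c1 : C4, ∑ c2 : C4, if RelP v c1 ∧ RelP v c2 then 1 else 0 := by
      intro v
      rw [relF_card_eq, pow_two, Finset.sum_mul_sum]
      exact Finset.sum_congr rfl (fun c1 _ => Finset.sum_congr rfl
        (fun c2 _ => booleMul _ _))
    simp only [expand]
    rw [Finset.sum_comm]
    refine Finset.sum_congr rfl (fun c1 _ => ?_)
    rw [Finset.sum_comm]
    refine Finset.sum_congr rfl (fun c2 _ => ?_)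
    rw [Finset.card_filter]
    exact Finset.sum_congr rfl (fun v _ => if_congr (okL_two c1 c2 v).symm rfl rfl)
  rw [swap]
  rw [Finset.sum_congr rfl (fun c1 _ => Finset.sum_congr rfl (fun c2 _ => closed2 hk c1 c2))]
  simp only [Finset.sum_add_distrib, ← Finset.sum_mul]
  rw [dSum2.1, dSum2.2.1, dSum2.2.2]

lemma moment3 {k : ℕ} (hk : 2 ≤ k) :
    ∑ v : Fin (k+1) → P2, (RelF v).card ^ 3 = 4 * 4 ^ k + 672 * 2 ^ k + 9408 := by
  have swap : ∑ v : Fin (k+1) → P2, (RelF v).card ^ 3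
      = ∑ c1 : C4, ∑ c2 : C4, ∑ c3 : C4,
          (univ.filter (fun v : Fin (k+1) → P2 => okL [c1, c2, c3] v)).card := by
    have expand : ∀ v : Fin (k+1) → P2, (RelF v).card ^ 3
        = ∑ c1 : C4, ∑ c2 : C4, ∑ c3 : C4,
            if RelP v c1 ∧ RelP v c2 ∧ RelP v c3 then 1 else 0 := by
      intro v
      rw [relF_card_eq, pow_succ, pow_two, Finset.sum_mul_sum]
      rw [Finset.sum_mul]
      refine Finset.sum_congr rfl (fun c1 _ => ?_)
      rw [Finset.sum_mul]
      refine Finset.sum_congr rfl (fun c2 _ => ?_)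
      rw [Finset.mul_sum]
      refine Finset.sum_congr rfl (fun c3 _ => ?_)
      rw [booleMul, booleMul]
      exact if_congr and_assoc rfl rfl
    simp only [expand]
    rw [Finset.sum_comm]
    refine Finset.sum_congr rfl (fun c1 _ => ?_)
    rw [Finset.sum_comm]
    refine Finset.sum_congr rfl (fun c2 _ => ?_)
    rw [Finset.sum_comm]
    refine Finset.sum_congr rfl (fun c3 _ => ?_)
    rw [Finset.card_filter]
    exact Finset.sum_congr rfl (fun v _ => if_congr (okL_three c1 c2 c3 v).symm rfl rfl)
  rw [swap]
  rw [Finset.sum_congr rfl (fun c1 _ => Finset.sum_congr rfl (fun c2 _ =>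
    Finset.sum_congr rfl (fun c3 _ => closed3 hk c1 c2 c3)))]
  simp only [Finset.sum_add_distrib, ← Finset.sum_mul]
  rw [dSum3.1, dSum3.2.1, dSum3.2.2]

end DP

namespace DP
open Finset Matrix

lemma mk_const_zero {k : ℕ} : mk (fun _ : Fin (k+1) => ((0:F2),(0:F2))) = 0 := by
  funext a b
  show (if (a : ℕ) = 0 then _ else _) = _
  split_ifs <;> rfl

lemma rank_zero_iff {k : ℕ} (hk : 0 < k) (v : Fin (k+1) → P2) :
    (mk v).rank = 0 ↔ v = fun _ => ((0:F2),(0:F2)) := by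
  constructor
  · intro h
    have hrange : LinearMap.range (mk v).mulVecLin = ⊥ := by
      rw [← Submodule.finrank_eq_zero (R := F2)]
      exact h
    have hent : ∀ (a : Fin (2+2)) (b : Fin k), mk v a b = 0 := by
      intro a b
      have hm : (mk v).mulVecLin (Pi.single b 1) = 0 := by
        have hmem : (mk v).mulVecLin (Pi.single b 1) ∈ LinearMap.range (mk v).mulVecLin :=
          LinearMap.mem_range_self _ _
        rwa [hrange, Submodule.mem_bot] at hmem
      have hfa := congrFun hm a
      rw [Matrix.mulVecLin_apply] at hfa
      simp only [Matrix.mulVec_single, mul_one] at hfa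
      simpa using hfa
    funext j
    have h1 : (v j).1 = 0 := by
      by_cases hj : (j : ℕ) < k
      · have := hent 0 ⟨(j : ℕ), hj⟩
        rwa [mk_top v 0 ⟨(j : ℕ), hj⟩ (by norm_num) j (by simp)] at this
      · have := hent 1 ⟨k-1, by omega⟩
        rwa [mk_top v 1 ⟨k-1, by omega⟩ (by norm_num) j
          (by simp; have := j.isLt; omega)] at this
    have h2 : (v j).2 = 0 := by
      by_cases hj : (j : ℕ) < k
      · have := hent 2 ⟨(j : ℕ), hj⟩
        rwa [mk_bot v 2 ⟨(j : ℕ), hj⟩ (by norm_num) j (by simp; omega)] at this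
      · have := hent 3 ⟨k-1, by omega⟩
        rwa [mk_bot v 3 ⟨k-1, by omega⟩ (by decide) j
          (by simp; have := j.isLt; omega)] at this
    exact Prod.ext h1 h2
  · rintro rfl
    rw [mk_const_zero, Matrix.rank_zero]

lemma rank0_count {k : ℕ} (hk : 0 < k) :
    (univ.filter (fun v : Fin (k+1) → P2 => (mk v).rank = 0)).card = 1 := by
  rw [Finset.card_eq_one]
  refine ⟨fun _ => ((0:F2),(0:F2)), ?_⟩
  ext v
  simp only [mem_filter, mem_univ, true_and, mem_singleton]
  exact rank_zero_iff hk v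

lemma partition {k : ℕ} (fn : ℕ → ℕ) :
    ∑ v : Fin (k+1) → P2, fn ((mk v).rank)
      = ∑ i ∈ Finset.range 5,
          (univ.filter (fun v : Fin (k+1) → P2 => (mk v).rank = i)).card * fn i := by
  classical
  have h := Finset.sum_fiberwise_of_maps_to (s := (univ : Finset (Fin (k+1) → P2)))
    (t := range 5) (g := fun v => (mk v).rank) (f := fun v => fn ((mk v).rank))
    (fun v _ => mem_range.mpr (Nat.lt_succ_of_le (rank_le_four v)))
  rw [← h]
  refine Finset.sum_congr rfl (fun i _ => ?_)
  rw [Finset.sum_congr rfl (fun v hv => by rw [(mem_filter.mp hv).2]),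
    Finset.sum_const, smul_eq_mul]

lemma count_link {k : ℕ} (hk : 0 < k) (i : ℕ) :
    doublePersymRankCount 2 2 k i
      = (univ.filter (fun v : Fin (k+1) → P2 => (mk v).rank = i)).card := by
  classical
  rw [count_eq hk i, Nat.card_eq_fintype_card, Fintype.card_subtype]

lemma four_pow (k : ℕ) : (4:ℕ) ^ k = 2^k * 2^k := by
  rw [show (4:ℕ) = 2 * 2 from rfl, mul_pow]

lemma main_core {k : ℕ} (hk : 2 ≤ k) :
    (univ.filter (fun v : Fin (k+1) → P2 => (mk v).rank = 1)).card = 9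
    ∧ (univ.filter (fun v : Fin (k+1) → P2 => (mk v).rank = 2)).card = 6 * 2^k + 30
    ∧ ((univ.filter (fun v : Fin (k+1) → P2 => (mk v).rank = 3)).card + 168 = 42 * 2^k)
    ∧ ((univ.filter (fun v : Fin (k+1) → P2 => (mk v).rank = 4)).card + 48 * 2^k
        = 4 * (2^k * 2^k) + 128) := by
  classical
  have n0 : (univ.filter (fun v : Fin (k+1) → P2 => (mk v).rank = 0)).card = 1 :=
    rank0_count (by omega)
  have h0 := partition (k := k) (fun _ => 1)
  rw [Finset.sum_const, Finset.card_univ,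
    show Fintype.card (Fin (k+1) → P2) = 4 * (2^k * 2^k) by
      rw [Fintype.card_fun, show Fintype.card P2 = 4 from rfl,
        Fintype.card_fin, pow_succ, four_pow]
      ring] at h0
  have h1 := partition (k := k) (fun i => 2^(4-i))
  rw [show ∑ v : Fin (k+1) → P2, (2:ℕ)^(4 - (mk v).rank) = 4*4^k + 60*2^k from
    (Finset.sum_congr rfl (fun v _ => (relF_card v).symm)).trans (moment1 hk)] at h1
  have h2 := partition (k := k) (fun i => (2^(4-i))^2)
  rw [show ∑ v : Fin (k+1) → P2, ((2:ℕ)^(4 - (mk v).rank))^2 = 4*4^k + 216*2^k + 768 from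
    (Finset.sum_congr rfl (fun v _ => by rw [relF_card v])).trans (moment2 hk)] at h2
  have h3 := partition (k := k) (fun i => (2^(4-i))^3)
  rw [show ∑ v : Fin (k+1) → P2, ((2:ℕ)^(4 - (mk v).rank))^3 = 4*4^k + 672*2^k + 9408 from
    (Finset.sum_congr rfl (fun v _ => by rw [relF_card v])).trans (moment3 hk)] at h3
  simp only [Finset.sum_range_succ, Finset.sum_range_zero, zero_add] at h0 h1 h2 h3
  rw [smul_eq_mul, mul_one, mul_one, mul_one, mul_one, mul_one, mul_one] at h0
  rw [show (2:ℕ)^(4-0) = 16 from rfl, show (2:ℕ)^(4-1) = 8 from rfl,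
    show (2:ℕ)^(4-2) = 4 from rfl, show (2:ℕ)^(4-3) = 2 from rfl,
    show (2:ℕ)^(4-4) = 1 from rfl, mul_one, four_pow] at h1
  rw [show ((2:ℕ)^(4-0))^2 = 256 from rfl, show ((2:ℕ)^(4-1))^2 = 64 from rfl,
    show ((2:ℕ)^(4-2))^2 = 16 from rfl, show ((2:ℕ)^(4-3))^2 = 4 from rfl,
    show ((2:ℕ)^(4-4))^2 = 1 from rfl, mul_one, four_pow] at h2
  rw [show ((2:ℕ)^(4-0))^3 = 4096 from rfl, show ((2:ℕ)^(4-1))^3 = 512 from rfl,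
    show ((2:ℕ)^(4-2))^3 = 64 from rfl, show ((2:ℕ)^(4-3))^3 = 8 from rfl,
    show ((2:ℕ)^(4-4))^3 = 1 from rfl, mul_one, four_pow] at h3
  refine ⟨?_, ?_, ?_, ?_⟩ <;>
  · generalize hX : (2:ℕ)^k = X at *
    generalize hY : X * X = Y at *
    omega

end DP

theorem doublePersym_two_two (k : ℕ) :
    (1 ≤ k → doublePersymRankCount 2 2 k 0 = 1) ∧
    (1 < k → doublePersymRankCount 2 2 k 1 = 9) ∧
    (2 < k → (doublePersymRankCount 2 2 k 2 : ℤ) = 3 * 2 ^ (k + 1) + 30) ∧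
    (3 < k → (doublePersymRankCount 2 2 k 3 : ℤ) = 21 * 2 ^ (k + 1) - 168) ∧
    (4 ≤ k → (doublePersymRankCount 2 2 k 4 : ℤ) = 2 ^ (2 * k + 2) - 3 * 2 ^ (k + 4) + 128) := by
  refine ⟨?_, ?_, ?_, ?_, ?_⟩
  · intro hk
    rw [DP.count_link (by omega) 0, DP.rank0_count (by omega)]
  · intro hk
    rw [DP.count_link (by omega) 1, (DP.main_core (by omega)).1]
  · intro hk
    rw [DP.count_link (by omega) 2, (DP.main_core (by omega)).2.1]
    push_cast
    rw [pow_succ]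
    ring
  · intro hk
    rw [DP.count_link (by omega) 3]
    have h := (DP.main_core (k := k) (by omega)).2.2.1
    have h' := congrArg (Nat.cast : ℕ → ℤ) h
    push_cast at h'
    rw [pow_succ]
    linarith
  · intro hk
    rw [DP.count_link (by omega) 4]
    have h := (DP.main_core (k := k) (by omega)).2.2.2
    have h' := congrArg (Nat.cast : ℕ → ℤ) h
    push_cast at h'
    have hp1 : (2:ℤ)^(2*k+2) = 4 * (2^k * 2^k) := by
      rw [pow_add, two_mul, pow_add]
      ring
    have hp2 : (2:ℤ)^(k+4) = 16 * 2^k := by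
      rw [pow_add]
      ring
    rw [hp1, hp2]
    linarith
end

section
/- For each i with 0 ≤ i ≤ 4, the number Γ_i^{[2;5]×4} of double persymmetric matrices of type [2;5]×4 over F₂ (a 7×4 matrix with a persymmetric 2×4 block on top of a persymmetric 5×4 block) of rank i equals: 1 if i = 0, 9 if i = 1, 94 if i = 2, 600 if i = 3, and 7488 if i = 4. -/
/-! ### Auxiliary fast computable counting machinery -/

def bit2 (a i : ℕ) : ZMod 2 := ⟨a / 2 ^ i % 2, Nat.mod_lt _ (by norm_num)⟩

def rowOk (r v : ℕ) : Prop :=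
  bit2 r 0 * bit2 v 0 + bit2 r 1 * bit2 v 1 + bit2 r 2 * bit2 v 2 + bit2 r 3 * bit2 v 3 = 0

instance (r v : ℕ) : Decidable (rowOk r v) := by unfold rowOk; infer_instance

def ok (a b v : ℕ) : Prop :=
  rowOk a v ∧ rowOk (a/2) v ∧ rowOk b v ∧ rowOk (b/2) v ∧ rowOk (b/4) v ∧
    rowOk (b/8) v ∧ rowOk (b/16) v

instance (a b v : ℕ) : Decidable (ok a b v) := by unfold ok; infer_instance

def sumV : ℕ → (ℕ → ℕ) → ℕ
  | 0, _ => 0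
  | n+1, f => sumV n f + f n

def innerCnt (a b : ℕ) : ℕ := sumV (2^4) (fun v => if ok a b v then 1 else 0)

def totalCnt (t : ℕ) : ℕ :=
  sumV (2^5) (fun a => sumV (2^8) (fun b => if innerCnt a b = t then 1 else 0))

lemma sumV_eq (f : ℕ → ℕ) : ∀ n, sumV n f = ∑ i ∈ Finset.range n, f i
  | 0 => rfl
  | n+1 => by rw [Finset.sum_range_succ, ← sumV_eq f n]; rfl

/-! ### The parametrization of double persymmetric matrices -/

def toMat (p : (Fin 5 → ZMod 2) × (Fin 8 → ZMod 2)) : Matrix (Fin (2+5)) (Fin 4) (ZMod 2) :=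
  fun i j => if h : (i : ℕ) < 2 then p.1 ⟨(i:ℕ) + j, by omega⟩
    else p.2 ⟨(i:ℕ) - 2 + j, by have := i.isLt; have := j.isLt; omega⟩

def decode4 (v : ℕ) : Fin 4 → ZMod 2 := fun b => ⟨v / 2 ^ (b : ℕ) % 2, Nat.mod_lt _ (by norm_num)⟩
def decode5 (v : ℕ) : Fin 5 → ZMod 2 := fun b => ⟨v / 2 ^ (b : ℕ) % 2, Nat.mod_lt _ (by norm_num)⟩
def decode8 (v : ℕ) : Fin 8 → ZMod 2 := fun b => ⟨v / 2 ^ (b : ℕ) % 2, Nat.mod_lt _ (by norm_num)⟩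

lemma forall_fin7 (P : Fin (2+5) → Prop) :
    (∀ i, P i) ↔ P 0 ∧ P 1 ∧ P 2 ∧ P 3 ∧ P 4 ∧ P 5 ∧ P 6 := by
  constructor
  · exact fun h => ⟨h 0, h 1, h 2, h 3, h 4, h 5, h 6⟩
  · rintro ⟨h0, h1, h2, h3, h4, h5, h6⟩ i
    fin_cases i <;> assumption

lemma bridge (a b v : ℕ) :
    (toMat (decode5 a, decode8 b)).mulVec (decode4 v) = 0 ↔ ok a b v := by
  rw [funext_iff, forall_fin7]
  simp only [Matrix.mulVec, dotProduct, toMat]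
  simp
  simp only [Matrix.mulVec, dotProduct, Fin.sum_univ_four, Pi.zero_apply, ok, rowOk,
    toMat, decode4, decode5, decode8, bit2,
    show ((0 : Fin (2+5)) : ℕ) = 0 from rfl, show ((1 : Fin (2+5)) : ℕ) = 1 from rfl,
    show ((2 : Fin (2+5)) : ℕ) = 2 from rfl, show ((3 : Fin (2+5)) : ℕ) = 3 from rfl,
    show ((4 : Fin (2+5)) : ℕ) = 4 from rfl, show ((5 : Fin (2+5)) : ℕ) = 5 from rfl,
    show ((6 : Fin (2+5)) : ℕ) = 6 from rfl,
    show ((0 : Fin 4) : ℕ) = 0 from rfl, show ((1 : Fin 4) : ℕ) = 1 from rfl,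
    show ((2 : Fin 4) : ℕ) = 2 from rfl, show ((3 : Fin 4) : ℕ) = 3 from rfl,
    Nat.div_div_eq_div_mul]
  norm_num

def fromMat (M : Matrix (Fin (2+5)) (Fin 4) (ZMod 2)) :
    (Fin 5 → ZMod 2) × (Fin 8 → ZMod 2) :=
  (fun j => if h : (j : ℕ) < 4 then M ⟨0, by omega⟩ ⟨j, h⟩ else M ⟨1, by omega⟩ ⟨3, by omega⟩,
   fun j => if h : (j : ℕ) < 4 then M ⟨2, by omega⟩ ⟨j, h⟩
     else M ⟨(j : ℕ) - 1, by omega⟩ ⟨3, by omega⟩)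

lemma toMat_isDP (p) : IsDoublePersymmetric 2 5 4 (toMat p) := by
  refine ⟨fun a a' b b' ha ha' hs => ?_, fun a a' b b' ha ha' hs => ?_⟩ <;>
  · have h1 := a.isLt; have h2 := a'.isLt
    simp only [toMat]
    split_ifs <;> first
      | exact congrArg p.1 (Fin.mk_eq_mk.mpr (by omega))
      | exact congrArg p.2 (Fin.mk_eq_mk.mpr (by omega))
      | omega

lemma fromMat_toMat (p) : fromMat (toMat p) = p := by
  ext j
  · have hj := j.isLt
    simp only [fromMat, toMat]
    split_ifs with h1 h2 h3 <;>
      first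
      | exact congrArg p.1 (Fin.ext (by simp <;> omega))
      | omega
  · have hj := j.isLt
    simp only [fromMat, toMat]
    split_ifs with h1 h2 h3 <;>
      first
      | exact congrArg p.2 (Fin.ext (by simp <;> omega))
      | omega

lemma toMat_fromMat {M} (hM : IsDoublePersymmetric 2 5 4 M) : toMat (fromMat M) = M := by
  funext i j
  have hi := i.isLt; have hj := j.isLt
  simp only [toMat, fromMat]
  split_ifs with h1 h2 h3 <;>
    first
    | exact hM.1 ⟨0, by omega⟩ i _ j (by simp) (by omega) (by simp <;> omega)
    | exact hM.1 ⟨1, by omega⟩ i ⟨3, by omega⟩ j (by simp) (by omega) (by simp <;> omega)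
    | exact hM.2 ⟨2, by omega⟩ i _ j (by simp) (by omega) (by simp <;> omega)
    | exact hM.2 ⟨(i:ℕ)-2+(j:ℕ)-1, by omega⟩ i ⟨3, by omega⟩ j (by simp <;> omega) (by omega)
        (by simp <;> omega)
    | omega

def matEquiv : ((Fin 5 → ZMod 2) × (Fin 8 → ZMod 2)) ≃
    {M : Matrix (Fin (2+5)) (Fin 4) (ZMod 2) // IsDoublePersymmetric 2 5 4 M} where
  toFun p := ⟨toMat p, toMat_isDP p⟩
  invFun M := fromMat M.1
  left_inv := fromMat_toMat
  right_inv M := Subtype.ext (toMat_fromMat M.2)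

/-! ### Rank via kernel counting -/

lemma rank_eq_iff (M : Matrix (Fin (2+5)) (Fin 4) (ZMod 2)) (r : ℕ) (hr : r ≤ 4) :
    M.rank = r ↔ Fintype.card {v : Fin 4 → ZMod 2 // M.mulVec v = 0} = 2 ^ (4 - r) := by
  haveI : Fintype (LinearMap.ker M.mulVecLin) := Fintype.ofFinite _
  have hcard : Fintype.card {v : Fin 4 → ZMod 2 // M.mulVec v = 0}
      = 2 ^ Module.finrank (ZMod 2) (LinearMap.ker M.mulVecLin) := by
    have e : {v : Fin 4 → ZMod 2 // M.mulVec v = 0} ≃ LinearMap.ker M.mulVecLin :=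
      Equiv.subtypeEquivRight (fun v => by simp [LinearMap.mem_ker])
    rw [Fintype.card_congr e]
    have := Module.card_eq_pow_finrank (K := ZMod 2) (V := LinearMap.ker M.mulVecLin)
    simpa using this
  have hrn : M.rank + Module.finrank (ZMod 2) (LinearMap.ker M.mulVecLin) = 4 := by
    have := LinearMap.finrank_range_add_finrank_ker M.mulVecLin
    rw [Matrix.rank]
    simpa using this
  rw [hcard]
  constructor
  · intro h; congr 1; omega
  · intro h
    have := Nat.pow_right_injective (le_refl 2) h
    omega

/-! ### Putting everything together -/

def decodeEquiv : (Fin (2^5) × Fin (2^8)) ≃ ((Fin 5 → ZMod 2) × (Fin 8 → ZMod 2)) :=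
  Equiv.prodCongr (finFunctionFinEquiv.symm : Fin (2^5) ≃ (Fin 5 → ZMod 2))
    (finFunctionFinEquiv.symm : Fin (2^8) ≃ (Fin 8 → ZMod 2))

lemma innerCnt_eq (a b : ℕ) :
    Fintype.card {v : Fin 4 → ZMod 2 // (toMat (decode5 a, decode8 b)).mulVec v = 0}
      = innerCnt a b := by
  have hsum : (∑ v : Fin 4 → ZMod 2,
        if (toMat (decode5 a, decode8 b)).mulVec v = 0 then 1 else 0)
      = ∑ u : Fin (2^4), if ok a b (u : ℕ) then 1 else 0 :=
    (Fintype.sum_equiv finFunctionFinEquiv.symm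
      (fun u : Fin (2^4) => if ok a b (u : ℕ) then 1 else 0)
      (fun v : Fin 4 → ZMod 2 =>
        if (toMat (decode5 a, decode8 b)).mulVec v = 0 then 1 else 0)
      (fun u => by
        rw [show (finFunctionFinEquiv.symm u : Fin 4 → ZMod 2) = decode4 (u : ℕ) from rfl]
        simp only [bridge])).symm
  rw [Fintype.card_subtype, Finset.card_filter, hsum, innerCnt, sumV_eq, Finset.sum_range]

lemma count_eq (r : ℕ) (hr : r ≤ 4) :
    doublePersymRankCount 2 5 4 r = totalCnt (2 ^ (4 - r)) := by
  have e1 : {M : Matrix (Fin (2+5)) (Fin 4) (ZMod 2) //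
      IsDoublePersymmetric 2 5 4 M ∧ M.rank = r} ≃
      {p : (Fin 5 → ZMod 2) × (Fin 8 → ZMod 2) // (toMat p).rank = r} :=
    (Equiv.subtypeSubtypeEquivSubtypeInter _ _).symm.trans
      (matEquiv.subtypeEquiv (fun p => Iff.rfl)).symm
  rw [doublePersymRankCount, Nat.card_congr e1,
    Nat.card_congr (Equiv.subtypeEquivRight (fun p => rank_eq_iff (toMat p) r hr)),
    Nat.card_congr ((decodeEquiv.subtypeEquiv (fun q => Iff.rfl)).symm :
      _ ≃ {q : Fin (2^5) × Fin (2^8) //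
        Fintype.card {v : Fin 4 → ZMod 2 // (toMat (decodeEquiv q)).mulVec v = 0}
          = 2 ^ (4 - r)}),
    Nat.card_eq_fintype_card, Fintype.card_subtype, Finset.card_filter,
    Fintype.sum_prod_type, totalCnt, sumV_eq, Finset.sum_range]
  refine Finset.sum_congr rfl (fun a _ => ?_)
  rw [sumV_eq, Finset.sum_range]
  refine Finset.sum_congr rfl (fun b _ => ?_)
  have h1 : decodeEquiv (a, b) = (decode5 (a : ℕ), decode8 (b : ℕ)) := rfl
  rw [h1, innerCnt_eq]

set_option maxRecDepth 100000
set_option maxHeartbeats 4000000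

theorem doublePersym_two_five_four :
    doublePersymRankCount 2 5 4 0 = 1 ∧
    doublePersymRankCount 2 5 4 1 = 9 ∧
    doublePersymRankCount 2 5 4 2 = 94 ∧
    doublePersymRankCount 2 5 4 3 = 600 ∧
    doublePersymRankCount 2 5 4 4 = 7488 := by
  refine ⟨?_, ?_, ?_, ?_, ?_⟩ <;> rw [count_eq _ (by norm_num)] <;> decide
end
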